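/- arXiv:1212.5302 — 4 statements merged into one kernel-verified Lean document; each statement's English description precedes it below -/
import Mathlib

section
/- For a multisegment a, let r(a) denote the multisegment obtained by replacing each segment [b,e] of a by the reflected segment [−e,−b]. Then for every multisegment a, MWA(r(a)) = r(MWA(a)); equivalently, the dual algorithm which at each stage picks segments with minimal beginning (and among them minimal end) and removes beginnings instead of ends computes the same multisegment MWA(a). -/
/-- A Speh quadruple: integers `A ≤ B`, `A ≤ C` with `A + D = B + C`. -/
def SpehQuad (A B C D : ℤ) : Prop := A ≤ B ∧ A ≤ C ∧ A + D = B + C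

/-- The integer segment (as a finite set) associated to a pair `(b, e)`. -/
noncomputable def segSet (s : ℤ × ℤ) : Finset ℤ := Finset.Icc s.1 s.2

/-- A finite set of integers is a ℤ-segment if it equals `Finset.Icc x y` for some `x ≤ y`. -/
def IsZSegment (S : Finset ℤ) : Prop := ∃ x y : ℤ, x ≤ y ∧ S = Finset.Icc x y

/-- The rectangular multisegment `m(A,B,C,D)`: the segments `[A+j, B+j]` for `j = 0, …, C−A`.
(Here `D = B + C − A` is determined by the other three entries.) -/
def rectMulti (A B C : ℤ) : Multiset (ℤ × ℤ) :=
  (Multiset.range (C - A + 1).toNat).map fun j => (A + (j : ℤ), B + (j : ℤ))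

/-- A multiset of pairs represents a multisegment when each pair `(b,e)` satisfies `b ≤ e`. -/
def ValidMS (a : Multiset (ℤ × ℤ)) : Prop := ∀ s ∈ a, s.1 ≤ s.2

/-- Total number of points of a multisegment (used as fuel for the MW algorithm). -/
def msSize (a : Multiset (ℤ × ℤ)) : ℕ := (a.map fun s => (s.2 + 1 - s.1).toNat).sum

/-- Removing the last element of a segment: `[b,e] ↦ [b,e−1]`, omitted if empty. -/
def truncate (s : ℤ × ℤ) : Multiset (ℤ × ℤ) :=
  if s.1 ≤ s.2 - 1 then {(s.1, s.2 - 1)} else 0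

/-- Maximum of a multiset of integers (default `0` on the empty multiset). -/
def msMaxD (m : Multiset ℤ) : ℤ := WithBot.unbotD 0 m.toFinset.max

/-- The chain of stages of one step of the Mœglin–Waldspurger algorithm.
`chainAux fuel rem b e` looks in `rem` for a segment with end `e` and beginning `< b`,
of maximal beginning; if found, it is removed, its truncation is recorded, and the chain
continues with end `e − 1`.  Returns the number of segments chosen together with the
resulting multisegment (remaining segments plus truncations of chosen ones). -/
def chainAux : ℕ → Multiset (ℤ × ℤ) → ℤ → ℤ → ℕ × Multiset (ℤ × ℤ)
  | 0, rem, _, _ => (0, rem)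
  | n + 1, rem, b, e =>
    let S := rem.filter fun s => s.2 = e ∧ s.1 < b
    if S = 0 then (0, rem)
    else
      let b' := msMaxD (S.map Prod.fst)
      let r := chainAux n (rem.erase (b', e)) b' (e - 1)
      (r.1 + 1, truncate (b', e) + r.2)

/-- One step of the Mœglin–Waldspurger algorithm on a (nonempty) multisegment:
returns the segment `Γ = [x−k+1, x]` and the multisegment `a′`. -/
def mwaStep (a : Multiset (ℤ × ℤ)) : (ℤ × ℤ) × Multiset (ℤ × ℤ) :=
  let x := msMaxD (a.map Prod.snd)
  let b1 := msMaxD ((a.filter fun s => s.2 = x).map Prod.fst)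
  let r := chainAux a.card (a.erase (b1, x)) b1 (x - 1)
  ((x - r.1, x), truncate (b1, x) + r.2)

/-- The Mœglin–Waldspurger algorithm, with fuel. -/
def mwaAux : ℕ → Multiset (ℤ × ℤ) → Multiset (ℤ × ℤ)
  | 0, _ => 0
  | n + 1, a =>
    if a = 0 then 0
    else
      let r := mwaStep a
      r.1 ::ₘ mwaAux n r.2

/-- The Mœglin–Waldspurger algorithm, computing the Zelevinsky dual of a multisegment.
(The fuel `msSize a` suffices: each step strictly decreases the total number of points.) -/
def MWA (a : Multiset (ℤ × ℤ)) : Multiset (ℤ × ℤ) := mwaAux (msSize a) a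

/-- Two segments are linked if their union is a ℤ-segment different from both of them. -/
def Linked (s t : ℤ × ℤ) : Prop :=
  IsZSegment (segSet s ∪ segSet t) ∧ segSet s ∪ segSet t ≠ segSet s ∧
    segSet s ∪ segSet t ≠ segSet t

/-- The intersection of two linked segments, as a multisegment (empty if disjoint). -/
def segInterM (s t : ℤ × ℤ) : Multiset (ℤ × ℤ) :=
  if max s.1 t.1 ≤ min s.2 t.2 then {(max s.1 t.1, min s.2 t.2)} else 0

/-- Elementary linking operation: `Prec c b` holds when `b` contains linked segments
`s, t` and `c` is obtained from `b` by replacing them with `s ∪ t` (and `s ∩ t` if nonempty). -/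
def Prec (c b : Multiset (ℤ × ℤ)) : Prop :=
  ∃ s t rest, b = s ::ₘ t ::ₘ rest ∧ Linked s t ∧
    c = (min s.1 t.1, max s.2 t.2) ::ₘ (segInterM s t + rest)

/-- The linking (strict) order on multisegments. -/
def MLt : Multiset (ℤ × ℤ) → Multiset (ℤ × ℤ) → Prop := Relation.TransGen Prec

/-- Strong ordering of Speh quadruples. -/
def StrongLt (A1 B1 C1 D1 A2 B2 C2 D2 : ℤ) : Prop :=
  A1 < A2 ∧ B1 < B2 ∧ C1 < C2 ∧ D1 < D2

/-- The set `I(A,B,C,D)` attached to a Speh quadruple. -/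
def ISet (A B C D : ℤ) : Set ℤ := {z : ℤ | z ≤ A - 1} ∪ ↑(Finset.Icc (B + 1) (D + 1))

/-- Pattern: integers `i < j < k` with `i, k ∈ I \ J` and `j ∈ J \ I`. -/
def PPat (I J : Set ℤ) : Prop :=
  ∃ i j k : ℤ, i < j ∧ j < k ∧ i ∈ I \ J ∧ j ∈ J \ I ∧ k ∈ I \ J

/-- Reflection of a multisegment: `[b,e] ↦ [−e,−b]`. -/
def reflMS (a : Multiset (ℤ × ℤ)) : Multiset (ℤ × ℤ) := a.map fun s => (-s.2, -s.1)


namespace MWAProof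
open Multiset

/-! ### Basics -/

theorem msMaxD_spec {m : Multiset ℤ} (h : m ≠ 0) :
    msMaxD m ∈ m ∧ ∀ z ∈ m, z ≤ msMaxD m := by
  have hne : m.toFinset.Nonempty := by
    obtain ⟨z, hz⟩ := Multiset.exists_mem_of_ne_zero h
    exact ⟨z, Multiset.mem_toFinset.2 hz⟩
  obtain ⟨b, hb⟩ := Finset.max_of_nonempty hne
  have hmb : msMaxD m = b := by simp [msMaxD, hb]
  constructor
  · rw [hmb]; exact Multiset.mem_toFinset.1 (Finset.mem_of_max hb)
  · intro z hz
    rw [hmb]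
    have := Finset.le_max (Multiset.mem_toFinset.2 hz)
    rw [hb] at this
    exact_mod_cast this

theorem msMaxD_eq {m : Multiset ℤ} {z : ℤ} (hz : z ∈ m) (hub : ∀ w ∈ m, w ≤ z) :
    msMaxD m = z := by
  have h : m ≠ 0 := fun h0 => by simp [h0] at hz
  obtain ⟨h1, h2⟩ := msMaxD_spec h
  exact le_antisymm (hub _ h1) (h2 _ hz)

theorem mem_reflMS {a : Multiset (ℤ × ℤ)} {s : ℤ × ℤ} :
    s ∈ reflMS a ↔ (-s.2, -s.1) ∈ a := by
  simp only [reflMS, Multiset.mem_map]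
  constructor
  · rintro ⟨t, ht, rfl⟩; simpa using ht
  · intro h; exact ⟨(-s.2, -s.1), h, by simp⟩

theorem reflMS_reflMS (a : Multiset (ℤ × ℤ)) : reflMS (reflMS a) = a := by
  simp [reflMS, Multiset.map_map, Function.comp]

theorem count_reflMS (a : Multiset (ℤ × ℤ)) (s : ℤ × ℤ) :
    Multiset.count s (reflMS a) = Multiset.count (-s.2, -s.1) a := by
  have hinj : Function.Injective (fun t : ℤ × ℤ => (-t.2, -t.1)) := by
    intro u v huv
    simp only [Prod.ext_iff] at huv ⊢
    omega
  have h2 := Multiset.count_map_eq_count' (fun t : ℤ × ℤ => (-t.2, -t.1)) a hinj (-s.2, -s.1)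
  simp only [neg_neg] at h2
  rw [reflMS]
  convert h2 using 2 <;> simp

theorem reflMS_add (u v : Multiset (ℤ × ℤ)) : reflMS (u + v) = reflMS u + reflMS v := by
  simp [reflMS]

theorem reflMS_sub (u v : Multiset (ℤ × ℤ)) : reflMS (u - v) = reflMS u - reflMS v := by
  ext s
  simp [count_reflMS, Multiset.count_sub]

theorem reflMS_cons (s : ℤ × ℤ) (u : Multiset (ℤ × ℤ)) :
    reflMS (s ::ₘ u) = (-s.2, -s.1) ::ₘ reflMS u := by
  simp [reflMS]

theorem reflMS_zero : reflMS 0 = 0 := rfl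

theorem reflMS_eq_zero {a : Multiset (ℤ × ℤ)} : reflMS a = 0 ↔ a = 0 := by
  simp [reflMS]

theorem validMS_reflMS {a : Multiset (ℤ × ℤ)} (ha : ValidMS a) : ValidMS (reflMS a) := by
  intro s hs
  have h := ha _ (mem_reflMS.1 hs)
  simp only at h
  omega

theorem msSize_reflMS (a : Multiset (ℤ × ℤ)) : msSize (reflMS a) = msSize a := by
  simp only [msSize, reflMS, Multiset.map_map, Function.comp]
  congr 1
  apply Multiset.map_congr rfl
  intro s _
  congr 1
  ring

theorem msSize_add (u v : Multiset (ℤ × ℤ)) : msSize (u + v) = msSize u + msSize v := by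
  simp [msSize]

theorem msSize_singleton (s : ℤ × ℤ) : msSize ({s} : Multiset (ℤ × ℤ)) = (s.2 + 1 - s.1).toNat := by
  simp [msSize]

theorem msSize_pos {a : Multiset (ℤ × ℤ)} (ha : ValidMS a) (h0 : a ≠ 0) : 0 < msSize a := by
  obtain ⟨s, hs⟩ := Multiset.exists_mem_of_ne_zero h0
  obtain ⟨t, ht⟩ := Multiset.exists_cons_of_mem hs
  have hv := ha _ hs
  rw [ht]
  simp only [msSize, Multiset.map_cons, Multiset.sum_cons]
  have : 0 < (s.2 + 1 - s.1).toNat := by omega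
  omega

theorem eq_zero_of_msSize_eq_zero {a : Multiset (ℤ × ℤ)} (ha : ValidMS a)
    (h : msSize a = 0) : a = 0 := by
  by_contra h0
  exact absurd h (by have := msSize_pos ha h0; omega)

end MWAProof

namespace MWAProof
open Multiset

/-! ### Chain specification -/

/-- Specification of the greedy descending chain of one MW step:
`β i` is the beginning of the `i`-th chosen segment, whose end is `x - i`. -/
def ChainP (a : Multiset (ℤ × ℤ)) (x : ℤ) (k : ℕ) (β : ℕ → ℤ) : Prop :=
  0 < k ∧ (∀ s ∈ a, s.2 ≤ x) ∧ (∀ i, i < k → (β i, x - (i : ℤ)) ∈ a) ∧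
  (∀ i, i + 1 < k → β (i + 1) < β i) ∧
  (∀ p, (p, x) ∈ a → p ≤ β 0) ∧
  (∀ i, i + 1 < k → ∀ p, p < β i → (p, x - (i : ℤ) - 1) ∈ a → p ≤ β (i + 1)) ∧
  (∀ p, p < β (k - 1) → (p, x - (k : ℤ)) ∈ a → False)

def chainS (x : ℤ) (k : ℕ) (β : ℕ → ℤ) : Multiset (ℤ × ℤ) :=
  ∑ i ∈ Finset.range k, ({(β i, x - (i : ℤ))} : Multiset (ℤ × ℤ))

def chainT (x : ℤ) (k : ℕ) (β : ℕ → ℤ) : Multiset (ℤ × ℤ) :=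
  ∑ i ∈ Finset.range k, truncate (β i, x - (i : ℤ))

theorem mem_finsum {ι : Type*} {s : Finset ι} {f : ι → Multiset (ℤ × ℤ)} {v : ℤ × ℤ} :
    v ∈ ∑ i ∈ s, f i ↔ ∃ i ∈ s, v ∈ f i := by
  classical
  induction s using Finset.induction with
  | empty => simp
  | insert i0 s0 h ih => simp [Finset.sum_insert h, Multiset.mem_add, ih]

theorem count_finsum {ι : Type*} {s : Finset ι} {f : ι → Multiset (ℤ × ℤ)} {v : ℤ × ℤ} :
    Multiset.count v (∑ i ∈ s, f i) = ∑ i ∈ s, Multiset.count v (f i) := by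
  classical
  induction s using Finset.induction with
  | empty => simp
  | insert i0 s0 h ih => simp [Finset.sum_insert h, ih]

theorem mem_chainS {x : ℤ} {k : ℕ} {β : ℕ → ℤ} {v : ℤ × ℤ} :
    v ∈ chainS x k β ↔ ∃ i, i < k ∧ β i = v.1 ∧ x - (i : ℤ) = v.2 := by
  simp only [chainS, mem_finsum, Multiset.mem_singleton, Finset.mem_range]
  constructor
  · rintro ⟨i, hi, rfl⟩; exact ⟨i, hi, rfl, rfl⟩
  · rintro ⟨i, hi, h1, h2⟩
    exact ⟨i, hi, by rw [h1, h2]⟩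

theorem count_chainS_le_one {x : ℤ} {k : ℕ} {β : ℕ → ℤ} (v : ℤ × ℤ) :
    Multiset.count v (chainS x k β) ≤ 1 := by
  rw [chainS, count_finsum]
  rcases Classical.em (∃ i, i < k ∧ (β i, x - (i : ℤ)) = v) with ⟨i0, hi0, hv⟩ | h
  · have : ∀ i ∈ Finset.range k,
        Multiset.count v ({(β i, x - (i : ℤ))} : Multiset (ℤ × ℤ))
          ≤ if i = i0 then 1 else 0 := by
      intro i hi
      rw [Multiset.count_singleton]
      by_cases hii : i = i0
      · simp [hii]; split <;> simp
      · have hne : (β i, x - (i : ℤ)) ≠ v := by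
          intro he
          apply hii
          rw [← hv] at he
          have h2 := (Prod.ext_iff.1 he).2
          simp only at h2
          omega
        simp only [hii, if_false]
        rw [if_neg (fun hvv => hne hvv.symm)]
    calc ∑ i ∈ Finset.range k, Multiset.count v ({(β i, x - (i : ℤ))} : Multiset (ℤ × ℤ))
        ≤ ∑ i ∈ Finset.range k, if i = i0 then 1 else 0 := Finset.sum_le_sum this
      _ ≤ 1 := by rw [Finset.sum_ite_eq' (Finset.range k) i0 fun _ => 1]; split <;> simp
  · have : ∀ i ∈ Finset.range k,
        Multiset.count v ({(β i, x - (i : ℤ))} : Multiset (ℤ × ℤ)) = 0 := by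
      intro i hi
      rw [Multiset.count_singleton]
      have hne : (β i, x - (i : ℤ)) ≠ v := fun he => h ⟨i, Finset.mem_range.1 hi, he⟩
      rw [if_neg (fun hvv => hne hvv.symm)]
    rw [Finset.sum_congr rfl this]
    simp

theorem chainS_le {a : Multiset (ℤ × ℤ)} {x : ℤ} {k : ℕ} {β : ℕ → ℤ}
    (hmem : ∀ i, i < k → (β i, x - (i : ℤ)) ∈ a) : chainS x k β ≤ a := by
  rw [Multiset.le_iff_count]
  intro v
  rcases Nat.eq_zero_or_pos (Multiset.count v (chainS x k β)) with h | h
  · omega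
  · have hv : v ∈ chainS x k β := Multiset.count_pos.1 h
    obtain ⟨i, hi, h1, h2⟩ := mem_chainS.1 hv
    have : v ∈ a := by
      have := hmem i hi
      rwa [h1, h2] at this
    have h2 := count_chainS_le_one (x := x) (k := k) (β := β) v
    have := Multiset.count_pos.2 this
    omega

theorem card_chainS (x : ℤ) (k : ℕ) (β : ℕ → ℤ) : Multiset.card (chainS x k β) = k := by
  induction k with
  | zero => simp [chainS]
  | succ n ih => rw [chainS, Finset.sum_range_succ, ← chainS, Multiset.card_add, ih]; simp

theorem count_chainS_end_zero {x : ℤ} {j : ℕ} {β : ℕ → ℤ} {v : ℤ × ℤ}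
    (hv : ∀ i, i < j → x - (i : ℤ) ≠ v.2) : Multiset.count v (chainS x j β) = 0 := by
  rw [Multiset.count_eq_zero]
  intro hm
  obtain ⟨i, hi, _, h2⟩ := mem_chainS.1 hm
  exact hv i hi h2

/-! ### chainAux computes the chain -/

theorem chainAux_eq {a : Multiset (ℤ × ℤ)} {x : ℤ} {k : ℕ} {β : ℕ → ℤ}
    (hC : ChainP a x k β) :
    ∀ fuel j, 1 ≤ j → j ≤ k → Multiset.card (a - chainS x j β) ≤ fuel →
    chainAux fuel (a - chainS x j β) (β (j - 1)) (x - (j : ℤ)) =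
      (k - j, (a - chainS x k β) +
        ∑ d ∈ Finset.range (k - j), truncate (β (j + d), x - (j : ℤ) - (d : ℤ))) := by
  obtain ⟨hk, hmax, hmem, hdec, hmax0, hmaxi, hterm⟩ := hC
  have hSle : ∀ j, j ≤ k → chainS x j β ≤ a := fun j hj =>
    chainS_le (fun i hi => hmem i (lt_of_lt_of_le hi hj))
  have hremmem : ∀ j, j < k → (β j, x - (j : ℤ)) ∈ a - chainS x j β := by
    intro j hj
    rw [← Multiset.count_pos, Multiset.count_sub]
    have h1 : (β j, x - (j : ℤ)) ∈ a := hmem j hj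
    have h2 : Multiset.count ((β j, x - (j : ℤ))) (chainS x j β) = 0 :=
      count_chainS_end_zero (fun i hi => by simp; omega)
    have := Multiset.count_pos.2 h1
    omega
  intro fuel
  induction fuel with
  | zero =>
    intro j hj1 hjk hcard
    have hrem0 : a - chainS x j β = 0 := Multiset.card_eq_zero.1 (Nat.le_zero.1 hcard)
    have hjek : j = k := by
      by_contra hne
      have hjk' : j < k := lt_of_le_of_ne hjk hne
      have := hremmem j hjk'
      rw [hrem0] at this
      simp at this
    subst hjek
    rw [hrem0]
    simp [chainAux, hrem0]
  | succ n ih =>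
    intro j hj1 hjk hcard
    rcases eq_or_lt_of_le hjk with hjek | hjk'
    · -- terminal: filter empty
      subst hjek
      have hfilt : Multiset.filter
          (fun s => s.2 = x - (j : ℤ) ∧ s.1 < β (j - 1)) (a - chainS x j β) = 0 := by
        rw [Multiset.filter_eq_nil]
        rintro s hs ⟨hse, hsb⟩
        have hsa : s ∈ a := Multiset.mem_of_le (Multiset.sub_le_self _ _) hs
        have : (s.1, s.2) ∈ a := by simpa using hsa
        rw [hse] at this
        exact hterm s.1 hsb this
      simp only [chainAux, hfilt]
      simp
    · -- step
      have hfmem : (β j, x - (j : ℤ)) ∈ Multiset.filter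
          (fun s => s.2 = x - (j : ℤ) ∧ s.1 < β (j - 1)) (a - chainS x j β) := by
        rw [Multiset.mem_filter]
        refine ⟨hremmem j hjk', rfl, ?_⟩
        have := hdec (j - 1) (by omega)
        have hj' : j - 1 + 1 = j := by omega
        rwa [hj'] at this
      set S0 := Multiset.filter
          (fun s => s.2 = x - (j : ℤ) ∧ s.1 < β (j - 1)) (a - chainS x j β) with hS0
      have hS0ne : ¬ S0 = 0 := fun h => by rw [h] at hfmem; simp at hfmem
      have hmax' : msMaxD (S0.map Prod.fst) = β j := by
        apply msMaxD_eq
        · exact Multiset.mem_map_of_mem _ hfmem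
        · intro w hw
          obtain ⟨s, hs, rfl⟩ := Multiset.mem_map.1 hw
          rw [Multiset.mem_filter] at hs
          obtain ⟨hsrem, hse, hsb⟩ := hs
          have hsa : s ∈ a := Multiset.mem_of_le (Multiset.sub_le_self _ _) hsrem
          have happ := hmaxi (j - 1) (by omega) s.1 hsb
          have hj' : j - 1 + 1 = j := by omega
          rw [hj'] at happ
          apply happ
          have hc : ((j - 1 : ℕ) : ℤ) = (j : ℤ) - 1 := by omega
          rw [hc]
          have heq : x - ((j : ℤ) - 1) - 1 = x - (j : ℤ) := by ring
          rw [heq, ← hse]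
          simpa using hsa
      have hsucc : chainS x (j + 1) β = chainS x j β + {(β j, x - (j : ℤ))} := by
        rw [chainS, Finset.sum_range_succ]
        rfl
      have herase : Multiset.erase (a - chainS x j β) (β j, x - (j : ℤ))
          = a - chainS x (j + 1) β := by
        rw [← Multiset.sub_singleton, hsucc, tsub_add_eq_tsub_tsub]
      have hcard' : Multiset.card (a - chainS x (j + 1) β) ≤ n := by
        rw [← herase]
        have h1 : Multiset.card (Multiset.erase (a - chainS x j β) (β j, x - (j : ℤ)))
            = Multiset.card (a - chainS x j β) - 1 :=
          Multiset.card_erase_of_mem (hremmem j hjk')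
        have h2 : (β j, x - (j : ℤ)) ∈ a - chainS x j β := hremmem j hjk'
        have h3 : 0 < Multiset.card (a - chainS x j β) :=
          Multiset.card_pos.2 (fun h0 => by rw [h0] at h2; simp at h2)
        omega
      have hrec := ih (j + 1) (by omega) (by omega) hcard'
      have hb : β (j + 1 - 1) = β j := by norm_num
      have he2 : x - (((j + 1 : ℕ)) : ℤ) = x - (j : ℤ) - 1 := by push_cast; ring
      rw [hb, he2] at hrec
      simp only [chainAux, ← hS0, hS0ne, if_neg, hmax', ↓reduceIte]
      rw [herase, hrec]
      have hkj : k - j = (k - (j + 1)) + 1 := by omega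
      have hsum : (∑ d ∈ Finset.range (k - j), truncate (β (j + d), x - (j : ℤ) - (d : ℤ)))
          = (∑ d ∈ Finset.range (k - (j + 1)),
              truncate (β (j + 1 + d), x - (j : ℤ) - 1 - (d : ℤ)))
            + truncate (β j, x - (j : ℤ)) := by
        rw [hkj, Finset.sum_range_succ']
        congr 1
        · apply Finset.sum_congr rfl
          intro d _
          have h1 : j + (d + 1) = j + 1 + d := by omega
          have h2 : x - (j : ℤ) - ((d + 1 : ℕ) : ℤ) = x - (j : ℤ) - 1 - (d : ℤ) := by
            push_cast; ring
          rw [h1, h2]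
        · norm_num
      have h1 : k - (j + 1) + 1 = k - j := by omega
      rw [h1, hsum]
      have hA := a - chainS x k β
      congr 1
      rw [← add_assoc, add_comm (truncate (β j, x - (j : ℤ))) (a - chainS x k β),
        add_assoc, add_comm (truncate (β j, x - (j : ℤ)))
          (∑ d ∈ Finset.range (k - (j + 1)),
            truncate (β (j + 1 + d), x - (j : ℤ) - 1 - (d : ℤ)))]

end MWAProof

namespace MWAProof
open Multiset

theorem mwaStep_eq {a : Multiset (ℤ × ℤ)} {x : ℤ} {k : ℕ} {β : ℕ → ℤ}
    (hC : ChainP a x k β) :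
    mwaStep a = ((x - ((k - 1 : ℕ) : ℤ), x), a - chainS x k β + chainT x k β) := by
  obtain ⟨hk, hmax, hmem, hdec, hmax0, hmaxi, hterm⟩ := hC
  have hmem0 : (β 0, x) ∈ a := by
    have := hmem 0 hk
    simpa using this
  have hx : msMaxD (a.map Prod.snd) = x := by
    apply msMaxD_eq
    · exact Multiset.mem_map.2 ⟨(β 0, x), hmem0, rfl⟩
    · intro w hw
      obtain ⟨s, hs, rfl⟩ := Multiset.mem_map.1 hw
      exact hmax s hs
  have hb1 : msMaxD ((a.filter fun s => s.2 = x).map Prod.fst) = β 0 := by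
    apply msMaxD_eq
    · exact Multiset.mem_map.2 ⟨(β 0, x), Multiset.mem_filter.2 ⟨hmem0, rfl⟩, rfl⟩
    · intro w hw
      obtain ⟨s, hs, rfl⟩ := Multiset.mem_map.1 hw
      obtain ⟨hsa, hse⟩ := Multiset.mem_filter.1 hs
      apply hmax0
      have : (s.1, s.2) ∈ a := by simpa using hsa
      rwa [hse] at this
  have hchain1 : chainS x 1 β = {(β 0, x)} := by
    simp [chainS]
  have herase : a.erase (β 0, x) = a - chainS x 1 β := by
    rw [hchain1, Multiset.sub_singleton]
  have hcard : Multiset.card (a - chainS x 1 β) ≤ Multiset.card a := by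
    rw [← herase]
    have := Multiset.card_erase_le (a := ((β 0 : ℤ), x)) (s := a)
    omega
  have hrec := chainAux_eq ⟨hk, hmax, hmem, hdec, hmax0, hmaxi, hterm⟩
      (Multiset.card a) 1 le_rfl hk hcard
  have hb : β (1 - 1) = β 0 := by norm_num
  have he : x - ((1 : ℕ) : ℤ) = x - 1 := by norm_num
  rw [hb, he] at hrec
  show (let x' := msMaxD (a.map Prod.snd);
    let b1 := msMaxD ((a.filter fun s => s.2 = x').map Prod.fst);
    let r := chainAux (Multiset.card a) (a.erase (b1, x')) b1 (x' - 1);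
    ((x' - r.1, x'), truncate (b1, x') + r.2)) = _
  simp only [hx, hb1]
  rw [herase, hrec]
  have hsum : (∑ d ∈ Finset.range (k - 1), truncate (β (1 + d), x - 1 - (d : ℤ)))
      + truncate (β 0, x) = chainT x k β := by
    rw [chainT]
    have hk1 : k = (k - 1) + 1 := by omega
    rw [hk1, Finset.sum_range_succ']
    congr 1
    · apply Finset.sum_congr rfl
      intro d _
      have h1 : 1 + d = d + 1 := by omega
      have h2 : x - 1 - (d : ℤ) = x - ((d + 1 : ℕ) : ℤ) := by push_cast; ring
      rw [h1, h2]
    · norm_num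
  dsimp only
  congr 1
  rw [← hsum]
  rw [← add_assoc, add_comm (truncate (β 0, x)) (a - chainS x k β), add_assoc,
    add_comm (truncate (β 0, x)) (∑ d ∈ Finset.range (k - 1), truncate (β (1 + d), x - 1 - (d : ℤ)))]

theorem chain_exists {a : Multiset (ℤ × ℤ)} (h0 : a ≠ 0) :
    ∃ k β, ChainP a (msMaxD (a.map Prod.snd)) k β := by
  set x := msMaxD (a.map Prod.snd) with hxdef
  have hmapne : a.map Prod.snd ≠ 0 := by
    intro h; apply h0
    rwa [← Multiset.card_eq_zero, Multiset.card_map, Multiset.card_eq_zero] at h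
  obtain ⟨hxmem, hxub⟩ := msMaxD_spec hmapne
  have hmax : ∀ s ∈ a, s.2 ≤ x := fun s hs => hxub _ (Multiset.mem_map_of_mem _ hs)
  obtain ⟨s0, hs0a, hs0x⟩ := Multiset.mem_map.1 hxmem
  have hfiltne : (a.filter fun s => s.2 = x).map Prod.fst ≠ 0 := by
    intro h
    rw [← Multiset.card_eq_zero, Multiset.card_map, Multiset.card_eq_zero] at h
    have : s0 ∈ a.filter fun s => s.2 = x := Multiset.mem_filter.2 ⟨hs0a, hs0x⟩
    rw [h] at this; simp at this
  set β0 := msMaxD ((a.filter fun s => s.2 = x).map Prod.fst) with hβ0def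
  obtain ⟨hβ0mem, hβ0ub⟩ := msMaxD_spec hfiltne
  rw [← hβ0def] at hβ0mem hβ0ub
  have hβ0a : (β0, x) ∈ a := by
    obtain ⟨s, hs, hs1⟩ := Multiset.mem_map.1 hβ0mem
    obtain ⟨hsa, hse⟩ := Multiset.mem_filter.1 hs
    have : s = (β0, x) := by
      rw [← hs1, ← hse]
    rwa [this] at hsa
  have hmax0 : ∀ p, (p, x) ∈ a → p ≤ β0 := by
    intro p hp
    exact hβ0ub _ (Multiset.mem_map.2 ⟨(p, x), Multiset.mem_filter.2 ⟨hp, rfl⟩, rfl⟩)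
  have key : ∀ n : ℕ,
      ∃ (k : ℕ) (β : ℕ → ℤ), 0 < k ∧ k ≤ n + 1 ∧
        (∀ i, i < k → (β i, x - (i : ℤ)) ∈ a) ∧
        (∀ i, i + 1 < k → β (i + 1) < β i) ∧
        (∀ p, (p, x) ∈ a → p ≤ β 0) ∧
        (∀ i, i + 1 < k → ∀ p, p < β i → (p, x - (i : ℤ) - 1) ∈ a → p ≤ β (i + 1)) ∧
        ((∀ p, p < β (k - 1) → (p, x - (k : ℤ)) ∈ a → False) ∨ k = n + 1) := by
    intro n
    induction n with
    | zero =>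
      refine ⟨1, fun _ => β0, one_pos, le_rfl, ?_, ?_, ?_, ?_, Or.inr rfl⟩
      · intro i hi
        interval_cases i
        simpa using hβ0a
      · omega
      · exact hmax0
      · omega
    | succ n ih =>
      obtain ⟨k, β, hk, hkn, hmem, hdec, hm0, hmi, halt⟩ := ih
      rcases halt with hterm | hkeq
      · exact ⟨k, β, hk, by omega, hmem, hdec, hm0, hmi, Or.inl hterm⟩
      · by_cases hT : ∀ p, p < β (k - 1) → (p, x - (k : ℤ)) ∈ a → False
        · exact ⟨k, β, hk, by omega, hmem, hdec, hm0, hmi, Or.inl hT⟩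
        · push_neg at hT
          obtain ⟨p0, hp0b, hp0a, -⟩ := hT
          have hCne : ((a.filter fun s => s.2 = x - (k : ℤ) ∧ s.1 < β (k - 1)).map
              Prod.fst) ≠ 0 := by
            intro h
            rw [← Multiset.card_eq_zero, Multiset.card_map, Multiset.card_eq_zero] at h
            have : (p0, x - (k : ℤ)) ∈ a.filter fun s => s.2 = x - (k : ℤ) ∧ s.1 < β (k - 1) :=
              Multiset.mem_filter.2 ⟨hp0a, rfl, hp0b⟩
            rw [h] at this; simp at this
          set βk := msMaxD ((a.filter fun s => s.2 = x - (k : ℤ) ∧ s.1 < β (k - 1)).map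
              Prod.fst) with hβkdef
          obtain ⟨hβkmem, hβkub⟩ := msMaxD_spec hCne
          rw [← hβkdef] at hβkmem hβkub
          obtain ⟨sk, hsk, hsk1⟩ := Multiset.mem_map.1 hβkmem
          obtain ⟨hska, hske, hskb⟩ := Multiset.mem_filter.1 hsk
          have hβka : (βk, x - (k : ℤ)) ∈ a := by
            have : sk = (βk, x - (k : ℤ)) := by rw [← hsk1, ← hske]
            rwa [this] at hska
          have hβkb : βk < β (k - 1) := by rw [← hsk1]; exact hskb
          have hβkub' : ∀ q, q < β (k - 1) → (q, x - (k : ℤ)) ∈ a → q ≤ βk := by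
            intro q hqb hqa
            exact hβkub _ (Multiset.mem_map.2 ⟨(q, x - (k : ℤ)),
              Multiset.mem_filter.2 ⟨hqa, rfl, hqb⟩, rfl⟩)
          refine ⟨k + 1, fun i => if i < k then β i else βk, by omega, by omega,
            ?_, ?_, ?_, ?_, Or.inr (by omega)⟩
          · intro i hi
            by_cases hik : i < k
            · simpa [hik] using hmem i hik
            · have : i = k := by omega
              subst this
              simpa [lt_irrefl] using hβka
          · intro i hi
            dsimp only
            by_cases hik : i + 1 < k
            · have h1 : i < k := by omega
              simpa [hik, h1] using hdec i hik
            · have hik' : i + 1 = k := by omega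
              have h1 : i < k := by omega
              have h2 : ¬ (i + 1 < k) := by omega
              simp only [h1, h2, if_pos, if_neg, if_true, if_false]
              have : i = k - 1 := by omega
              rw [this]
              exact hβkb
          · intro p hp
            have h1 : (0 : ℕ) < k := hk
            simpa [h1] using hm0 p hp
          · intro i hi p hpb hpa
            dsimp only at hpb ⊢
            by_cases hik : i + 1 < k
            · have h1 : i < k := by omega
              rw [if_pos h1] at hpb
              rw [if_pos hik]
              exact hmi i hik p hpb hpa
            · have hik' : i + 1 = k := by omega
              have h1 : i < k := by omega
              have h2 : ¬ (i + 1 < k) := by omega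
              rw [if_pos h1] at hpb
              rw [if_neg h2]
              apply hβkub'
              · have : i = k - 1 := by omega
                rwa [this] at hpb
              · have hc : x - (i : ℤ) - 1 = x - (k : ℤ) := by
                  have : (k : ℤ) = (i : ℤ) + 1 := by exact_mod_cast congrArg Nat.cast hik'.symm
                  omega
                rwa [hc] at hpa
  obtain ⟨k, β, hk, hkn, hmem, hdec, hm0, hmi, halt⟩ := key (Multiset.card a)
  rcases halt with hterm | hkeq
  · exact ⟨k, β, hk, hmax, hmem, hdec, hm0, hmi, hterm⟩
  · exfalso
    have hle : chainS x k β ≤ a := chainS_le hmem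
    have hcard := Multiset.card_le_card hle
    rw [card_chainS] at hcard
    omega

end MWAProof

namespace MWAProof
open Multiset

/-! ### Dual chains -/

/-- Specification of the greedy dual chain (minimal beginnings / minimal ends). -/
def DChainP (a : Multiset (ℤ × ℤ)) (y : ℤ) (l : ℕ) (ε : ℕ → ℤ) : Prop :=
  0 < l ∧ (∀ s ∈ a, y ≤ s.1) ∧ (∀ j, j < l → (y + (j : ℤ), ε j) ∈ a) ∧
  (∀ j, j + 1 < l → ε j < ε (j + 1)) ∧
  (∀ e, (y, e) ∈ a → ε 0 ≤ e) ∧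
  (∀ j, j + 1 < l → ∀ e, ε j < e → (y + (j : ℤ) + 1, e) ∈ a → ε (j + 1) ≤ e) ∧
  (∀ e, ε (l - 1) < e → (y + (l : ℤ), e) ∈ a → False)

noncomputable def btrunc (s : ℤ × ℤ) : Multiset (ℤ × ℤ) :=
  if s.1 + 1 ≤ s.2 then {(s.1 + 1, s.2)} else 0

def dchainS (y : ℤ) (l : ℕ) (ε : ℕ → ℤ) : Multiset (ℤ × ℤ) :=
  ∑ j ∈ Finset.range l, ({(y + (j : ℤ), ε j)} : Multiset (ℤ × ℤ))

noncomputable def dchainT (y : ℤ) (l : ℕ) (ε : ℕ → ℤ) : Multiset (ℤ × ℤ) :=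
  ∑ j ∈ Finset.range l, btrunc (y + (j : ℤ), ε j)

theorem mem_dchainS {y : ℤ} {l : ℕ} {ε : ℕ → ℤ} {v : ℤ × ℤ} :
    v ∈ dchainS y l ε ↔ ∃ j, j < l ∧ y + (j : ℤ) = v.1 ∧ ε j = v.2 := by
  simp only [dchainS, mem_finsum, Multiset.mem_singleton, Finset.mem_range]
  constructor
  · rintro ⟨j, hj, rfl⟩; exact ⟨j, hj, rfl, rfl⟩
  · rintro ⟨j, hj, h1, h2⟩
    exact ⟨j, hj, by rw [h1, h2]⟩

theorem dchainP_iff {a : Multiset (ℤ × ℤ)} {y : ℤ} {l : ℕ} {ε : ℕ → ℤ} :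
    DChainP a y l ε ↔ ChainP (reflMS a) (-y) l (fun j => -(ε j)) := by
  constructor
  · rintro ⟨h1, h2, h3, h4, h5, h6, h7⟩
    refine ⟨h1, ?_, ?_, ?_, ?_, ?_, ?_⟩
    · intro s hs
      have h := h2 _ (mem_reflMS.1 hs)
      simp only at h
      omega
    · intro i hi
      rw [mem_reflMS]
      convert h3 i hi using 2 <;> simp <;> ring
    · intro i hi
      simpa using h4 i hi
    · intro p hp
      rw [mem_reflMS] at hp
      simp only [neg_neg] at hp
      have := h5 (-p) hp
      simp only
      omega
    · intro i hi p hpb hpa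
      rw [mem_reflMS] at hpa
      simp only at hpa hpb ⊢
      have hpa' : (y + (i : ℤ) + 1, -p) ∈ a := by
        convert hpa using 2
        ring
      have := h6 i hi (-p) (by omega) hpa'
      omega
    · intro p hpb hpa
      rw [mem_reflMS] at hpa
      simp only at hpa hpb
      have hpa' : (y + (l : ℤ), -p) ∈ a := by
        convert hpa using 2
        ring
      exact h7 (-p) (by omega) hpa'
  · rintro ⟨h1, h2, h3, h4, h5, h6, h7⟩
    refine ⟨h1, ?_, ?_, ?_, ?_, ?_, ?_⟩
    · intro s hs
      have hs' : (-s.2, -s.1) ∈ reflMS a := by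
        rw [mem_reflMS]; simpa using hs
      have h := h2 _ hs'
      simp only at h
      omega
    · intro j hj
      have h := h3 j hj
      rw [mem_reflMS] at h
      convert h using 2 <;> simp <;> ring
    · intro j hj
      have := h4 j hj
      simp only at this
      omega
    · intro e he
      have he' : (-e, -y) ∈ reflMS a := by
        rw [mem_reflMS]; simpa using he
      have := h5 (-e) he'
      simp only at this
      omega
    · intro j hj e heb hea
      have hea' : (-e, -y - (j : ℤ) - 1) ∈ reflMS a := by
        rw [mem_reflMS]
        convert hea using 2 <;> simp <;> ring
      have := h6 j hj (-e) (by simp only; omega) hea'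
      simp only at this
      omega
    · intro e heb hea
      have hea' : (-e, -y - (l : ℤ)) ∈ reflMS a := by
        rw [mem_reflMS]
        convert hea using 2 <;> simp <;> ring
      exact h7 (-e) (by simp only at heb ⊢; omega) hea'

theorem chainP_iff {a : Multiset (ℤ × ℤ)} {x : ℤ} {k : ℕ} {β : ℕ → ℤ} :
    ChainP a x k β ↔ DChainP (reflMS a) (-x) k (fun i => -(β i)) := by
  have h := dchainP_iff (a := reflMS a) (y := -x) (l := k) (ε := fun i => -(β i))
  rw [h, reflMS_reflMS, neg_neg]
  have hfun : (fun i => -(-(β i))) = β := funext fun i => neg_neg _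
  rw [hfun]

theorem reflMS_finsum {ι : Type*} (s : Finset ι) (f : ι → Multiset (ℤ × ℤ)) :
    reflMS (∑ i ∈ s, f i) = ∑ i ∈ s, reflMS (f i) := by
  classical
  induction s using Finset.induction with
  | empty => simp [reflMS]
  | insert i0 s0 h ih => rw [Finset.sum_insert h, Finset.sum_insert h, reflMS_add, ih]

theorem reflMS_singleton (s : ℤ × ℤ) :
    reflMS ({s} : Multiset (ℤ × ℤ)) = {(-s.2, -s.1)} := by
  simp [reflMS]

theorem reflMS_dchainS (y : ℤ) (l : ℕ) (ε : ℕ → ℤ) :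
    reflMS (dchainS y l ε) = chainS (-y) l (fun j => -(ε j)) := by
  rw [dchainS, chainS, reflMS_finsum]
  apply Finset.sum_congr rfl
  intro j _
  rw [reflMS_singleton]
  congr 1
  simp
  ring

theorem reflMS_btrunc (p q : ℤ) :
    reflMS (btrunc (p, q)) = truncate (-q, -p) := by
  rw [btrunc, truncate]
  simp only
  split_ifs with h1 h2 h2
  · rw [reflMS_singleton]
    norm_num
    ring
  · exfalso; omega
  · exfalso; omega
  · rfl

theorem reflMS_dchainT (y : ℤ) (l : ℕ) (ε : ℕ → ℤ) :
    reflMS (dchainT y l ε) = chainT (-y) l (fun j => -(ε j)) := by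
  rw [dchainT, chainT, reflMS_finsum]
  apply Finset.sum_congr rfl
  intro j _
  rw [reflMS_btrunc]
  congr 1
  ring

theorem mwaStep_refl_eq {a : Multiset (ℤ × ℤ)} {y : ℤ} {l : ℕ} {ε : ℕ → ℤ}
    (hD : DChainP a y l ε) :
    mwaStep (reflMS a) = ((-y - ((l - 1 : ℕ) : ℤ), -y),
      reflMS (a - dchainS y l ε + dchainT y l ε)) := by
  have hC := dchainP_iff.1 hD
  rw [mwaStep_eq hC, reflMS_add, reflMS_sub, reflMS_dchainS, reflMS_dchainT]

end MWAProof

namespace MWAProof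
open Multiset

/-! ### Sizes, validity, unfolding MWA -/

theorem msSize_finsum {ι : Type*} (s : Finset ι) (f : ι → Multiset (ℤ × ℤ)) :
    msSize (∑ i ∈ s, f i) = ∑ i ∈ s, msSize (f i) := by
  classical
  induction s using Finset.induction with
  | empty => simp [msSize]
  | insert i0 s0 h ih => rw [Finset.sum_insert h, Finset.sum_insert h, msSize_add, ih]

theorem validMS_of_le {a b : Multiset (ℤ × ℤ)} (h : b ≤ a) (ha : ValidMS a) : ValidMS b :=
  fun s hs => ha s (Multiset.mem_of_le h hs)

theorem validMS_step {a : Multiset (ℤ × ℤ)} {x : ℤ} {k : ℕ} {β : ℕ → ℤ}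
    (ha : ValidMS a) :
    ValidMS (a - chainS x k β + chainT x k β) := by
  intro s hs
  rcases Multiset.mem_add.1 hs with h | h
  · exact ha s (Multiset.mem_of_le (Multiset.sub_le_self _ _) h)
  · obtain ⟨i, _, hi⟩ := mem_finsum.1 h
    rw [truncate] at hi
    split_ifs at hi with hc
    · rw [Multiset.mem_singleton] at hi
      subst hi
      simpa using hc
    · simp at hi

theorem msSize_step {a : Multiset (ℤ × ℤ)} {x : ℤ} {k : ℕ} {β : ℕ → ℤ}
    (ha : ValidMS a) (hC : ChainP a x k β) :
    msSize (a - chainS x k β + chainT x k β) + k = msSize a := by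
  obtain ⟨hk, hmax, hmem, _, _, _, _⟩ := hC
  have hle : chainS x k β ≤ a := chainS_le hmem
  have h1 : (a - chainS x k β) + chainS x k β = a := tsub_add_cancel_of_le hle
  have h2 : msSize (a - chainS x k β) + msSize (chainS x k β) = msSize a := by
    rw [← msSize_add, h1]
  have h3 : msSize (chainS x k β) = msSize (chainT x k β) + k := by
    rw [chainS, chainT, msSize_finsum, msSize_finsum]
    have : ∀ i ∈ Finset.range k,
        msSize ({(β i, x - (i : ℤ))} : Multiset (ℤ × ℤ))
          = msSize (truncate (β i, x - (i : ℤ))) + 1 := by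
      intro i hi
      have hv : β i ≤ x - (i : ℤ) := ha _ (hmem i (Finset.mem_range.1 hi))
      rw [msSize_singleton, truncate]
      simp only
      split_ifs with hc
      · rw [msSize_singleton]
        simp only
        omega
      · have : β i = x - (i : ℤ) := by omega
        simp [msSize]
        omega
    rw [Finset.sum_congr rfl this, Finset.sum_add_distrib]
    congr 1
    simp
  rw [msSize_add]
  omega

theorem mwaStep_valid_size {a : Multiset (ℤ × ℤ)} (ha : ValidMS a) (h0 : a ≠ 0) :
    ValidMS (mwaStep a).2 ∧ msSize (mwaStep a).2 < msSize a := by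
  obtain ⟨k, β, hC⟩ := chain_exists h0
  have he := mwaStep_eq hC
  rw [he]
  constructor
  · exact validMS_step ha
  · have := msSize_step ha hC
    have hk : 0 < k := hC.1
    simp only
    omega

theorem mwaAux_congr : ∀ n m (a : Multiset (ℤ × ℤ)), ValidMS a →
    msSize a ≤ n → msSize a ≤ m → mwaAux n a = mwaAux m a := by
  intro n
  induction n with
  | zero =>
    intro m a ha hn _
    have h0 : a = 0 := eq_zero_of_msSize_eq_zero ha (Nat.le_zero.1 hn)
    subst h0
    cases m <;> simp [mwaAux]
  | succ n ih =>
    intro m a ha hn hm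
    by_cases h0 : a = 0
    · subst h0
      cases m <;> simp [mwaAux]
    · have hpos := msSize_pos ha h0
      have hm1 : ∃ m', m = m' + 1 := ⟨m - 1, by omega⟩
      obtain ⟨m', rfl⟩ := hm1
      simp only [mwaAux, h0, if_neg, if_false]
      obtain ⟨hv, hsz⟩ := mwaStep_valid_size ha h0
      rw [ih m' (mwaStep a).2 hv (by omega) (by omega)]

theorem MWA_unfold {a : Multiset (ℤ × ℤ)} (ha : ValidMS a) (h0 : a ≠ 0) :
    MWA a = (mwaStep a).1 ::ₘ MWA (mwaStep a).2 := by
  have hpos := msSize_pos ha h0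
  obtain ⟨n, hn⟩ : ∃ n, msSize a = n + 1 := ⟨msSize a - 1, by omega⟩
  rw [MWA, hn]
  simp only [mwaAux, h0, if_neg, if_false]
  obtain ⟨hv, hsz⟩ := mwaStep_valid_size ha h0
  rw [MWA, mwaAux_congr n (msSize (mwaStep a).2) (mwaStep a).2 hv (by omega) le_rfl]

end MWAProof

namespace MWAProof
open Multiset

/-! ### Point propagation and the degenerate case -/

section Chains

variable {a : Multiset (ℤ × ℤ)} {x y : ℤ} {k l : ℕ} {β ε : ℕ → ℤ}

theorem beta_anti (hC : ChainP a x k β) :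
    ∀ d i, i + d < k → β (i + d) + d ≤ β i := by
  intro d
  induction d with
  | zero => intro i _; simp
  | succ d ih =>
    intro i hi
    have h1 := ih (i + 1) (by omega)
    have h2 := hC.2.2.2.1 i (by omega)
    have h3 : i + 1 + d = i + (d + 1) := by omega
    rw [h3] at h1
    push_cast
    omega

theorem eps_lb (ha : ValidMS a) (hD : DChainP a y l ε) : ∀ j, j < l → y + (j : ℤ) ≤ ε j := by
  intro j hj
  have := ha _ (hD.2.2.1 j hj)
  simpa using this

theorem beta_ub (ha : ValidMS a) (hC : ChainP a x k β) : ∀ i, i < k → β i ≤ x - (i : ℤ) := by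
  intro i hi
  have := ha _ (hC.2.2.1 i hi)
  simpa using this

/-- E-chain points propagate downward. -/
theorem dpoints_down (ha : ValidMS a) (hD : DChainP a y l ε) {j : ℕ} (hj : j < l)
    (hpt : ε j = y + (j : ℤ)) : ∀ r, r ≤ j → ε r = y + (r : ℤ) := by
  have key : ∀ d, d ≤ j → ε (j - d) = y + ((j - d : ℕ) : ℤ) := by
    intro d
    induction d with
    | zero => intro _; simpa using hpt
    | succ d ih =>
      intro hd
      have h1 := ih (by omega)
      set r := j - (d + 1) with hr
      have hr1 : r + 1 = j - d := by omega
      have h2 := hD.2.2.2.1 r (by omega)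
      rw [hr1, h1] at h2
      have h3 := eps_lb ha hD r (by omega)
      have hc : ((j - d : ℕ) : ℤ) = ((r : ℕ) : ℤ) + 1 := by omega
      omega
  intro r hr
  have := key (j - r) (by omega)
  have hc : j - (j - r) = r := by omega
  rwa [hc] at this

/-- A shared point forces the degenerate situation. -/
theorem shared_point_degen (ha : ValidMS a) (hC : ChainP a x k β) (hD : DChainP a y l ε)
    {i j : ℕ} (hi : i < k) (hj : j < l) (hb : β i = y + (j : ℤ)) (he : x - (i : ℤ) = ε j)
    (hpt : ε j = y + (j : ℤ)) :
    ∃ i', i' < k ∧ β i' = y ∧ x - (i' : ℤ) = y := by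
  have hdown := dpoints_down ha hD hj hpt
  have hmemE : ∀ r, r ≤ j → (y + (r : ℤ), y + (r : ℤ)) ∈ a := by
    intro r hr
    have := hD.2.2.1 r (by omega)
    rwa [hdown r hr] at this
  have key : ∀ d, d ≤ j → i + d < k ∧ β (i + d) = y + ((j - d : ℕ) : ℤ) ∧
      x - ((i + d : ℕ) : ℤ) = y + ((j - d : ℕ) : ℤ) := by
    intro d
    induction d with
    | zero =>
      intro _
      refine ⟨by omega, by simpa using by rw [hb], by push_cast; omega⟩
    | succ d ih =>
      intro hd
      obtain ⟨h1, h2, h3⟩ := ih (by omega)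
      have hz : ((j - d : ℕ) : ℤ) = (j : ℤ) - (d : ℤ) := by omega
      -- candidate (z - 1, z - 1) ∈ a where z = y + (j - d)
      have hcand : (y + ((j - (d + 1) : ℕ) : ℤ), y + ((j - (d + 1) : ℕ) : ℤ)) ∈ a :=
        hmemE (j - (d + 1)) (by omega)
      have hzz : ((j - (d + 1) : ℕ) : ℤ) = ((j - d : ℕ) : ℤ) - 1 := by omega
      have hlt : y + ((j - (d + 1) : ℕ) : ℤ) < β (i + d) := by omega
      have hik : i + d + 1 < k := by
        by_contra hik'
        have hik2 : i + d + 1 = k := by omega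
        apply hC.2.2.2.2.2.2 (y + ((j - (d + 1) : ℕ) : ℤ))
        · have : i + d = k - 1 := by omega
          rwa [this] at hlt
        · have hce : x - (k : ℤ) = y + ((j - (d + 1) : ℕ) : ℤ) := by
            have : (k : ℤ) = ((i + d : ℕ) : ℤ) + 1 := by omega
            omega
          rw [hce]
          exact hcand
      refine ⟨by omega, ?_, ?_⟩
      · have hmax := hC.2.2.2.2.2.1 (i + d) hik (y + ((j - (d + 1) : ℕ) : ℤ)) hlt
        have hce : x - ((i + d : ℕ) : ℤ) - 1 = y + ((j - (d + 1) : ℕ) : ℤ) := by omega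
        have hcand' : (y + ((j - (d + 1) : ℕ) : ℤ), x - ((i + d : ℕ) : ℤ) - 1) ∈ a := by
          rwa [hce]
        have h4 := hmax hcand'
        have h5 := hC.2.2.2.1 (i + d) hik
        have hieq : i + (d + 1) = (i + d) + 1 := by omega
        rw [hieq]
        omega
      · have : ((i + (d + 1) : ℕ) : ℤ) = ((i + d : ℕ) : ℤ) + 1 := by push_cast; ring
        omega
  obtain ⟨h1, h2, h3⟩ := key j (le_refl j)
  exact ⟨i + j, h1, by simpa using h2, by simpa using h3⟩

/-- If `(x,x)` occurs in the dual chain then we are in the degenerate case. -/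
theorem dual_top_degen (ha : ValidMS a) (hC : ChainP a x k β) (hD : DChainP a y l ε)
    {j : ℕ} (hj : j < l) (h1 : y + (j : ℤ) = x) (h2 : ε j = x) :
    ∃ i', i' < k ∧ β i' = y ∧ x - (i' : ℤ) = y := by
  have hxx : (x, x) ∈ a := by
    have := hD.2.2.1 j hj
    rwa [h1, h2] at this
  have hβ0 : β 0 = x := by
    have hub := beta_ub ha hC 0 hC.1
    have hlb := hC.2.2.2.2.1 x hxx
    simp only [Nat.cast_zero, sub_zero] at hub
    omega
  exact shared_point_degen ha hC hD hC.1 hj (by omega) (by simp; omega) (by omega)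

/-- Structure of the degenerate case: the chain consists of all the points `x, x-1, …, y`. -/
theorem degen_points (ha : ValidMS a) (hC : ChainP a x k β) (hD : DChainP a y l ε)
    (hdeg : ∃ i', i' < k ∧ β i' = y ∧ x - (i' : ℤ) = y) :
    (∀ i, i < k → β i = x - (i : ℤ)) ∧ x = y + ((k : ℤ) - 1) := by
  obtain ⟨i0, hi0, hb0, he0⟩ := hdeg
  have hi0k : i0 = k - 1 := by
    by_contra hne
    have h1 : i0 + 1 < k := by omega
    have h2 := hC.2.2.2.1 i0 h1
    have h3 := hD.2.1 _ (hC.2.2.1 (i0 + 1) h1)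
    simp only at h3
    omega
  have hxk : x = y + ((k : ℤ) - 1) := by
    have : ((i0 : ℕ) : ℤ) = (k : ℤ) - 1 := by omega
    omega
  refine ⟨?_, hxk⟩
  intro i hi
  have hub := beta_ub ha hC i hi
  have hlb := beta_anti hC (i0 - i) i (by omega)
  have hcast : ((i0 - i : ℕ) : ℤ) = ((i0 : ℕ) : ℤ) - (i : ℤ) := by omega
  have : i + (i0 - i) = i0 := by omega
  rw [this] at hlb
  omega

end Chains

end MWAProof

namespace MWAProof
open Multiset

open Classical in
/-- Key lemma: in the non-degenerate case, the dual chain of `a' = a - S + TS`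
has the same beginnings as that of `a`, with ends lowered by one exactly at
the shared segments. -/
theorem claim1 {a : Multiset (ℤ × ℤ)} {x y : ℤ} {k l : ℕ} {β ε : ℕ → ℤ}
    (ha : ValidMS a) (hC : ChainP a x k β) (hD : DChainP a y l ε)
    (hnd : ¬ ∃ i', i' < k ∧ β i' = y ∧ x - (i' : ℤ) = y) :
    DChainP (a - chainS x k β + chainT x k β) y l
      (fun j => ε j -
        (if ∃ i, i < k ∧ β i = y + (j : ℤ) ∧ x - (i : ℤ) = ε j then 1 else 0)) := by
  obtain ⟨hk, hmax, hmem, hdec, hmax0, hmaxi, hterm⟩ := hC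
  have hC' : ChainP a x k β := ⟨hk, hmax, hmem, hdec, hmax0, hmaxi, hterm⟩
  obtain ⟨hl, hbeg, hmemD, hinc, hmin0, hmini, htermD⟩ := hD
  have hD' : DChainP a y l ε := ⟨hl, hbeg, hmemD, hinc, hmin0, hmini, htermD⟩
  have hnopt : ∀ i j, i < k → j < l → β i = y + (j : ℤ) → x - (i : ℤ) = ε j →
      y + (j : ℤ) < ε j := by
    intro i j hi hj hb he
    have hlb := eps_lb ha hD' j hj
    rcases lt_or_eq_of_le hlb with h | h
    · exact h
    · exact absurd (shared_point_degen ha hC' hD' hi hj hb he h.symm) hnd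
  have memA1 : ∀ p e, (p, e) ∈ a → (∀ i, i < k → ¬(β i = p ∧ x - (i : ℤ) = e)) →
      (p, e) ∈ a - chainS x k β + chainT x k β := by
    intro p e hpe hno
    refine Multiset.mem_add.2 (Or.inl ?_)
    rw [← Multiset.count_pos, Multiset.count_sub]
    have h1 : Multiset.count ((p, e)) (chainS x k β) = 0 := by
      rw [Multiset.count_eq_zero]
      intro hm
      obtain ⟨i, hi, h2, h3⟩ := mem_chainS.1 hm
      exact hno i hi ⟨h2, h3⟩
    have := Multiset.count_pos.2 hpe
    omega
  have memA2 : ∀ i, i < k → β i ≤ x - (i : ℤ) - 1 →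
      (β i, x - (i : ℤ) - 1) ∈ a - chainS x k β + chainT x k β := by
    intro i hi hle
    refine Multiset.mem_add.2 (Or.inr ?_)
    refine mem_finsum.2 ⟨i, Finset.mem_range.2 hi, ?_⟩
    rw [truncate]
    simp only
    rw [if_pos hle]
    simp
  have memA3 : ∀ p e, (p, e) ∈ a - chainS x k β + chainT x k β →
      (p, e) ∈ a ∨ ∃ i, i < k ∧ β i = p ∧ x - (i : ℤ) - 1 = e ∧ p ≤ e := by
    intro p e hpe
    rcases Multiset.mem_add.1 hpe with h | h
    · exact Or.inl (Multiset.mem_of_le (Multiset.sub_le_self _ _) h)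
    · obtain ⟨i, hi, hmem'⟩ := mem_finsum.1 h
      rw [truncate] at hmem'
      simp only at hmem'
      split_ifs at hmem' with hc
      · rw [Multiset.mem_singleton] at hmem'
        obtain ⟨h1, h2⟩ := Prod.ext_iff.1 hmem'
        simp only at h1 h2
        exact Or.inr ⟨i, Finset.mem_range.1 hi, h1.symm, h2.symm, by omega⟩
      · simp at hmem'
  -- the "ladder" argument, used in F5 and F6:
  -- if Δ_t = (y+j, ε j) is shared and (y+j+1, ε j) ∈ a then β (t-1) = y+j+1 and
  -- Δ_(t-1) = (y+j+1, ε j + 1) ∈ a.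
  have ladder : ∀ t (j : ℕ), t < k → β t = y + (j : ℤ) → x - (t : ℤ) = ε j →
      (y + (j : ℤ) + 1, ε j) ∈ a → (y + (j : ℤ) + 1, ε j + 1) ∈ a := by
    intro t j ht hb he hmem2
    rcases Nat.eq_zero_or_pos t with ht0 | htpos
    · exfalso
      subst ht0
      have hx : ε j = x := by simpa using he.symm
      have := hmax0 (y + (j : ℤ) + 1) (by rwa [hx] at hmem2)
      omega
    · have ht1 : (t - 1) + 1 < k ∨ (t - 1) + 1 = k := by omega
      have ht1' : (t - 1) + 1 = t := by omega
      have hbt1 : β (t - 1) = y + (j : ℤ) + 1 := by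
        have hdec1 : β t < β (t - 1) := by
          have := hdec (t - 1) (by omega)
          rwa [ht1'] at this
        by_contra hne
        have hlt : y + (j : ℤ) + 1 < β (t - 1) := by omega
        have hcast : x - ((t - 1 : ℕ) : ℤ) - 1 = x - (t : ℤ) := by omega
        have happ := hmaxi (t - 1) (by omega) (y + (j : ℤ) + 1) hlt
        rw [hcast, he] at happ
        have := happ hmem2
        rw [ht1'] at this
        omega
      have := hmem (t - 1) (by omega)
      rw [hbt1] at this
      have hcast : x - ((t - 1 : ℕ) : ℤ) = ε j + 1 := by omega
      rwa [hcast] at this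
  refine ⟨hl, ?_, ?_, ?_, ?_, ?_, ?_⟩
  · -- F0: beginnings are ≥ y
    intro s hs
    rcases memA3 s.1 s.2 (by simpa using hs) with h | ⟨i, hi, hb, _, _⟩
    · have := hbeg _ h; simpa using this
    · have := hbeg _ (hmem i hi)
      simp only at this
      omega
  · -- F2: membership of the new chain elements
    intro j hj
    simp only
    by_cases hsh : ∃ i, i < k ∧ β i = y + (j : ℤ) ∧ x - (i : ℤ) = ε j
    · rw [if_pos hsh]
      obtain ⟨i, hi, hb, he⟩ := hsh
      have hpt := hnopt i j hi hj hb he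
      have h2 := memA2 i hi (by omega)
      rw [hb] at h2
      have hce : x - (i : ℤ) - 1 = ε j - 1 := by omega
      rwa [hce] at h2
    · rw [if_neg hsh]
      have h2 := memA1 (y + (j : ℤ)) (ε j) (hmemD j hj) ?_
      · simpa using h2
      · intro i hi hcon
        exact hsh ⟨i, hi, hcon.1, hcon.2⟩
  · -- F3: strict increase
    intro j hj
    simp only
    by_cases hsh1 : ∃ i, i < k ∧ β i = y + ((j + 1 : ℕ) : ℤ) ∧ x - (i : ℤ) = ε (j + 1)
    · rw [if_pos hsh1]
      have hlt := hinc j hj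
      by_cases hsh0 : ∃ i, i < k ∧ β i = y + (j : ℤ) ∧ x - (i : ℤ) = ε j
      · rw [if_pos hsh0]; omega
      · rw [if_neg hsh0]
        -- need ε j < ε (j+1) - 1; suppose ε (j+1) = ε j + 1 and derive Sh j
        by_contra hcon
        have heq : ε (j + 1) = ε j + 1 := by omega
        obtain ⟨i, hi, hb, he⟩ := hsh1
        apply hsh0
        have hbj : y + ((j + 1 : ℕ) : ℤ) = y + (j : ℤ) + 1 := by push_cast; ring
        have hEj : (y + (j : ℤ), ε j) ∈ a := hmemD j (by omega)
        by_cases hik : i + 1 < k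
        · have happ := hmaxi i hik (y + (j : ℤ)) (by omega)
          have hce : x - (i : ℤ) - 1 = ε j := by omega
          rw [hce] at happ
          have h4 := happ hEj
          have h5 := hdec i hik
          refine ⟨i + 1, hik, by push_cast; omega, by push_cast; omega⟩
        · exfalso
          have hik' : i + 1 = k := by omega
          apply hterm (y + (j : ℤ))
          · have : i = k - 1 := by omega
            rw [← this]
            omega
          · have hce : x - (k : ℤ) = ε j := by
              have : (k : ℤ) = (i : ℤ) + 1 := by omega
              omega
            rw [hce]
            exact hEj
    · rw [if_neg hsh1]
      have hlt := hinc j hj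
      rcases Classical.em (∃ i, i < k ∧ β i = y + (j : ℤ) ∧ x - (i : ℤ) = ε j) with h | h
      · rw [if_pos h]; omega
      · rw [if_neg h]; omega
  · -- F4: minimality at the first line
    intro e he
    simp only
    rcases memA3 y e he with h | ⟨i, hi, hb, hce, hple⟩
    · have := hmin0 e h
      split_ifs <;> omega
    · -- e = x - i - 1 with β i = y
      have hmm := hmem i hi
      rw [hb] at hmm
      have h1 := hmin0 _ hmm
      by_cases hsh0 : ∃ i', i' < k ∧ β i' = y + ((0 : ℕ) : ℤ) ∧ x - (i' : ℤ) = ε 0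
      · rw [if_pos hsh0]; omega
      · rw [if_neg hsh0]
        -- need ε 0 ≤ e = x - i - 1, i.e. ε 0 ≠ x - i
        rcases lt_or_eq_of_le h1 with h2 | h2
        · omega
        · exfalso
          exact hsh0 ⟨i, hi, by simpa using hb, by omega⟩
  · -- F5: minimality at intermediate lines
    intro j hj e hgt hmem'
    simp only at hgt ⊢
    have hσ0cases : (if ∃ i, i < k ∧ β i = y + (j : ℤ) ∧ x - (i : ℤ) = ε j then (1:ℤ) else 0) = 0
        ∨ (if ∃ i, i < k ∧ β i = y + (j : ℤ) ∧ x - (i : ℤ) = ε j then (1:ℤ) else 0) = 1 := by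
      split <;> simp
    rcases memA3 _ _ hmem' with h | ⟨i, hi, hb, hce, hple⟩
    · -- (y+j+1, e) ∈ a
      by_cases hlt : ε j < e
      · have := hmini j hj e hlt h
        split_ifs <;> omega
      · -- forced: shared j and e = ε j
        have hshj : ∃ i, i < k ∧ β i = y + (j : ℤ) ∧ x - (i : ℤ) = ε j := by
          by_contra hcon
          rw [if_neg hcon] at hgt
          omega
        rw [if_pos hshj] at hgt
        have hej : e = ε j := by omega
        obtain ⟨t, ht, hb', he'⟩ := hshj
        subst hej
        have hlad := ladder t j ht hb' he' h
        have h4 := hmini j hj (ε j + 1) (by omega) hlad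
        have h5 := hinc j hj
        have h6 : ε (j + 1) = ε j + 1 := by omega
        have hsh1 : ∃ i, i < k ∧ β i = y + ((j + 1 : ℕ) : ℤ) ∧ x - (i : ℤ) = ε (j + 1) := by
          rcases Nat.eq_zero_or_pos t with ht0 | htpos
          · exfalso
            subst ht0
            have hx : ε j = x := by simpa using he'.symm
            have := hmax0 (y + (j : ℤ) + 1) (by rwa [hx] at h)
            omega
          · refine ⟨t - 1, by omega, ?_, ?_⟩
            · -- β (t-1) = y + j + 1, proved as in `ladder`
              have hdec1 : β t < β (t - 1) := by
                have hd := hdec (t - 1) (by omega)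
                have ht1' : (t - 1) + 1 = t := by omega
                rwa [ht1'] at hd
              have hble : β (t - 1) ≤ y + (j : ℤ) + 1 := by
                by_contra hne
                have hlt2 : y + (j : ℤ) + 1 < β (t - 1) := by omega
                have hcast : x - ((t - 1 : ℕ) : ℤ) - 1 = x - (t : ℤ) := by omega
                have happ := hmaxi (t - 1) (by omega) (y + (j : ℤ) + 1) hlt2
                rw [hcast, he'] at happ
                have h7 := happ h
                have ht1' : (t - 1) + 1 = t := by omega
                rw [ht1'] at h7
                omega
              omega
            · push_cast
              omega
        rw [if_pos hsh1]
        omega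
    · -- truncated candidate: e = x - i - 1, β i = y + j + 1
      have hxi : ε j < x - (i : ℤ) := by
        rcases hσ0cases with h0 | h0 <;> rw [h0] at hgt <;> omega
      have hmm := hmem i hi
      rw [hb] at hmm
      have hcast : y + ((j + 1 : ℕ) : ℤ) = y + (j : ℤ) + 1 := by push_cast; ring
      have h4 := hmini j hj (x - (i : ℤ)) hxi hmm
      rcases lt_or_eq_of_le h4 with h5 | h5
      · split_ifs <;> omega
      · have hsh1 : ∃ i', i' < k ∧ β i' = y + ((j + 1 : ℕ) : ℤ) ∧ x - (i' : ℤ) = ε (j + 1) := by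
          exact ⟨i, hi, by omega, by omega⟩
        rw [if_pos hsh1]
        omega
  · -- F6: termination
    intro e hgt hmem'
    simp only at hgt
    rcases memA3 _ _ hmem' with h | ⟨i, hi, hb, hce, hple⟩
    · by_cases hlt : ε (l - 1) < e
      · exact htermD e hlt h
      · have hshl : ∃ i, i < k ∧ β i = y + ((l - 1 : ℕ) : ℤ) ∧ x - (i : ℤ) = ε (l - 1) := by
          by_contra hcon
          rw [if_neg hcon] at hgt
          omega
        rw [if_pos hshl] at hgt
        have hel : e = ε (l - 1) := by omega
        obtain ⟨t, ht, hb', he'⟩ := hshl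
        have hcast : y + (l : ℤ) = y + ((l - 1 : ℕ) : ℤ) + 1 := by omega
        rw [hcast] at h
        subst hel
        have hlad := ladder t (l - 1) ht hb' he' h
        apply htermD (ε (l - 1) + 1) (by omega)
        rw [hcast]
        exact hlad
    · -- truncated: end x - i - 1 > ε (l-1) - σ, so x - i > ε (l-1)
      have hxi : ε (l - 1) < x - (i : ℤ) := by
        have hif : (if ∃ i, i < k ∧ β i = y + ((l - 1 : ℕ) : ℤ) ∧ x - (i : ℤ) = ε (l - 1)
            then (1:ℤ) else 0) = 0 ∨
            (if ∃ i, i < k ∧ β i = y + ((l - 1 : ℕ) : ℤ) ∧ x - (i : ℤ) = ε (l - 1)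
            then (1:ℤ) else 0) = 1 := by split <;> simp
        rcases hif with h0 | h0 <;> rw [h0] at hgt <;> omega
      have hmm := hmem i hi
      rw [hb] at hmm
      exact htermD (x - (i : ℤ)) hxi hmm

end MWAProof

namespace MWAProof
open Multiset

theorem count_dchainS_le_one {y : ℤ} {l : ℕ} {ε : ℕ → ℤ} (v : ℤ × ℤ) :
    Multiset.count v (dchainS y l ε) ≤ 1 := by
  rw [dchainS, count_finsum]
  rcases Classical.em (∃ j, j < l ∧ (y + (j : ℤ), ε j) = v) with ⟨j0, hj0, hv⟩ | h
  · have hle : ∀ j ∈ Finset.range l,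
        Multiset.count v ({(y + (j : ℤ), ε j)} : Multiset (ℤ × ℤ))
          ≤ if j = j0 then 1 else 0 := by
      intro j hj
      rw [Multiset.count_singleton]
      by_cases hjj : j = j0
      · simp [hjj]; split <;> simp
      · have hne : (y + (j : ℤ), ε j) ≠ v := by
          intro he
          apply hjj
          rw [← hv] at he
          have h1 := (Prod.ext_iff.1 he).1
          simp only at h1
          omega
        simp only [hjj, if_false]
        rw [if_neg (fun hvv => hne hvv.symm)]
    calc ∑ j ∈ Finset.range l, Multiset.count v ({(y + (j : ℤ), ε j)} : Multiset (ℤ × ℤ))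
        ≤ ∑ j ∈ Finset.range l, if j = j0 then 1 else 0 := Finset.sum_le_sum hle
      _ ≤ 1 := by rw [Finset.sum_ite_eq' (Finset.range l) j0 fun _ => 1]; split <;> simp
  · have hz : ∀ j ∈ Finset.range l,
        Multiset.count v ({(y + (j : ℤ), ε j)} : Multiset (ℤ × ℤ)) = 0 := by
      intro j hj
      rw [Multiset.count_singleton]
      have hne : (y + (j : ℤ), ε j) ≠ v := fun he => h ⟨j, Finset.mem_range.1 hj, he⟩
      rw [if_neg (fun hvv => hne hvv.symm)]
    rw [Finset.sum_congr rfl hz]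
    simp

theorem dchainS_le {a : Multiset (ℤ × ℤ)} {y : ℤ} {l : ℕ} {ε : ℕ → ℤ}
    (hmem : ∀ j, j < l → (y + (j : ℤ), ε j) ∈ a) : dchainS y l ε ≤ a := by
  rw [Multiset.le_iff_count]
  intro v
  rcases Nat.eq_zero_or_pos (Multiset.count v (dchainS y l ε)) with h | h
  · omega
  · have hv : v ∈ dchainS y l ε := Multiset.count_pos.1 h
    obtain ⟨j, hj, h1, h2⟩ := mem_dchainS.1 hv
    have hva : v ∈ a := by
      have := hmem j hj
      rwa [h1, h2] at this
    have hle := count_dchainS_le_one (y := y) (l := l) (ε := ε) v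
    have := Multiset.count_pos.2 hva
    omega

open Classical in
/-- The bookkeeping identity: performing the dual step after the max step gives
the same multisegment as the other way around. -/
theorem bookkeeping {a : Multiset (ℤ × ℤ)} {x y : ℤ} {k l : ℕ} {β ε : ℕ → ℤ}
    (ha : ValidMS a) (hC : ChainP a x k β) (hD : DChainP a y l ε)
    (hnd : ¬ ∃ i', i' < k ∧ β i' = y ∧ x - (i' : ℤ) = y)
    (h1 : dchainS y l (fun j => ε j -
        (if ∃ i, i < k ∧ β i = y + (j : ℤ) ∧ x - (i : ℤ) = ε j then 1 else 0))
      ≤ a - chainS x k β + chainT x k β)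
    (h2 : chainS x k (fun i => β i +
        (if ∃ j, j < l ∧ β i = y + (j : ℤ) ∧ x - (i : ℤ) = ε j then 1 else 0))
      ≤ a - dchainS y l ε + dchainT y l ε) :
    (a - chainS x k β + chainT x k β)
      - dchainS y l (fun j => ε j -
          (if ∃ i, i < k ∧ β i = y + (j : ℤ) ∧ x - (i : ℤ) = ε j then 1 else 0))
      + dchainT y l (fun j => ε j -
          (if ∃ i, i < k ∧ β i = y + (j : ℤ) ∧ x - (i : ℤ) = ε j then 1 else 0))
    = (a - dchainS y l ε + dchainT y l ε)
      - chainS x k (fun i => β i +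
          (if ∃ j, j < l ∧ β i = y + (j : ℤ) ∧ x - (i : ℤ) = ε j then 1 else 0))
      + chainT x k (fun i => β i +
          (if ∃ j, j < l ∧ β i = y + (j : ℤ) ∧ x - (i : ℤ) = ε j then 1 else 0)) := by
  have hS : chainS x k β ≤ a := chainS_le hC.2.2.1
  have hT : dchainS y l ε ≤ a := dchainS_le hD.2.2.1
  set ε' : ℕ → ℤ := fun j => ε j -
      (if ∃ i, i < k ∧ β i = y + (j : ℤ) ∧ x - (i : ℤ) = ε j then 1 else 0) with hε'
  set β' : ℕ → ℤ := fun i => β i +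
      (if ∃ j, j < l ∧ β i = y + (j : ℤ) ∧ x - (i : ℤ) = ε j then 1 else 0) with hβ'
  -- the combinatorial identity
  have hIdent : chainT x k β + dchainT y l ε' + dchainS y l ε + chainS x k β'
      = chainS x k β + dchainS y l ε' + dchainT y l ε + chainT x k β' := by
    classical
    set P : ℕ → Prop := fun i => ∃ j, j < l ∧ β i = y + (j : ℤ) ∧ x - (i : ℤ) = ε j with hP
    set Q : ℕ → Prop := fun j => ∃ i, i < k ∧ β i = y + (j : ℤ) ∧ x - (i : ℤ) = ε j with hQ
    set A1 := (Finset.range k).filter P with hA1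
    set A0 := (Finset.range k).filter (fun i => ¬ P i) with hA0
    set B1 := (Finset.range l).filter Q with hB1
    set B0 := (Finset.range l).filter (fun j => ¬ Q j) with hB0
    have hsplitk : ∀ f : ℕ → Multiset (ℤ × ℤ),
        ∑ i ∈ Finset.range k, f i = (∑ i ∈ A1, f i) + (∑ i ∈ A0, f i) := by
      intro f
      rw [hA1, hA0, Finset.sum_filter_add_sum_filter_not]
    have hsplitl : ∀ f : ℕ → Multiset (ℤ × ℤ),
        ∑ j ∈ Finset.range l, f j = (∑ j ∈ B1, f j) + (∑ j ∈ B0, f j) := by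
      intro f
      rw [hB1, hB0, Finset.sum_filter_add_sum_filter_not]
    -- unshared parts agree termwise
    have hA0eq1 : ∀ i ∈ A0, truncate (β' i, x - (i : ℤ)) = truncate (β i, x - (i : ℤ)) := by
      intro i hi
      have hnp : ¬ P i := (Finset.mem_filter.1 hi).2
      rw [hβ']
      simp only
      rw [if_neg hnp, add_zero]
    have hA0eq2 : ∀ i ∈ A0,
        ({(β' i, x - (i : ℤ))} : Multiset (ℤ × ℤ)) = {(β i, x - (i : ℤ))} := by
      intro i hi
      have hnp : ¬ P i := (Finset.mem_filter.1 hi).2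
      rw [hβ']
      simp only
      rw [if_neg hnp, add_zero]
    have hB0eq1 : ∀ j ∈ B0, btrunc (y + (j : ℤ), ε' j) = btrunc (y + (j : ℤ), ε j) := by
      intro j hj
      have hnq : ¬ Q j := (Finset.mem_filter.1 hj).2
      rw [hε']
      simp only
      rw [if_neg hnq, sub_zero]
    have hB0eq2 : ∀ j ∈ B0,
        ({(y + (j : ℤ), ε' j)} : Multiset (ℤ × ℤ)) = {(y + (j : ℤ), ε j)} := by
      intro j hj
      have hnq : ¬ Q j := (Finset.mem_filter.1 hj).2
      rw [hε']
      simp only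
      rw [if_neg hnq, sub_zero]
    -- the bijection between shared indices
    have hφmem : ∀ i ∈ A1, (β i - y).toNat ∈ B1 ∧
        ((β i - y).toNat : ℤ) = β i - y ∧ x - (i : ℤ) = ε ((β i - y).toNat) := by
      intro i hi
      have hmf := Finset.mem_filter.1 hi
      have hik := Finset.mem_range.1 hmf.1
      obtain ⟨j, hjl, hb, he⟩ := hmf.2
      have hj : (β i - y).toNat = j := by omega
      refine ⟨?_, by omega, by rw [hj]; exact he⟩
      rw [hj]
      exact Finset.mem_filter.2 ⟨Finset.mem_range.2 hjl,
        ⟨i, Finset.mem_range.1 (Finset.mem_filter.1 hi).1, hb, he⟩⟩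
    have hψmem : ∀ j ∈ B1, (x - ε j).toNat ∈ A1 ∧
        ((x - ε j).toNat : ℤ) = x - ε j ∧ β ((x - ε j).toNat) = y + (j : ℤ) := by
      intro j hj
      have hmf := Finset.mem_filter.1 hj
      have hjl := Finset.mem_range.1 hmf.1
      obtain ⟨i, hik, hb, he⟩ := hmf.2
      have hi : (x - ε j).toNat = i := by omega
      refine ⟨?_, by omega, by rw [hi]; exact hb⟩
      rw [hi]
      exact Finset.mem_filter.2 ⟨Finset.mem_range.2 hik,
        ⟨j, Finset.mem_range.1 (Finset.mem_filter.1 hj).1, hb, he⟩⟩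
    have hinv1 : ∀ j ∈ B1, (β ((x - ε j).toNat) - y).toNat = j := by
      intro j hj
      obtain ⟨h1, h2, h3⟩ := hψmem j hj
      omega
    have hinv2 : ∀ i ∈ A1, (x - ε ((β i - y).toNat)).toNat = i := by
      intro i hi
      obtain ⟨h1, h2, h3⟩ := hφmem i hi
      omega
    have hBsum : ∀ g : ℕ → Multiset (ℤ × ℤ),
        ∑ j ∈ B1, g j = ∑ i ∈ A1, g ((β i - y).toNat) := by
      intro g
      refine Finset.sum_nbij' (fun j => (x - ε j).toNat) (fun i => (β i - y).toNat)
        (fun j hj => (hψmem j hj).1) (fun i hi => (hφmem i hi).1) hinv1 hinv2 ?_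
      intro j hj
      rw [hinv1 j hj]
    -- pointwise identity on shared indices
    have hpoint : ∀ i ∈ A1,
        truncate (β i, x - (i : ℤ)) + btrunc (y + (((β i - y).toNat : ℕ) : ℤ), ε' ((β i - y).toNat))
          + {(y + (((β i - y).toNat : ℕ) : ℤ), ε ((β i - y).toNat))} + {(β' i, x - (i : ℤ))}
        = {(β i, x - (i : ℤ))} + {(y + (((β i - y).toNat : ℕ) : ℤ), ε' ((β i - y).toNat))}
          + btrunc (y + (((β i - y).toNat : ℕ) : ℤ), ε ((β i - y).toNat))
          + truncate (β' i, x - (i : ℤ)) := by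
      intro i hi
      obtain ⟨hmemB, hcast, hxe⟩ := hφmem i hi
      set j := (β i - y).toNat with hjdef
      have hik : i < k := Finset.mem_range.1 (Finset.mem_filter.1 hi).1
      have hjl : j < l := Finset.mem_range.1 (Finset.mem_filter.1 hmemB).1
      have hQj : Q j := (Finset.mem_filter.1 hmemB).2
      have hPi : P i := (Finset.mem_filter.1 hi).2
      have hyj : y + (j : ℤ) = β i := by omega
      -- no shared point
      have hpq : β i < x - (i : ℤ) := by
        have := shared_point_degen ha hC hD hik hjl (by omega) (by omega)
        rcases lt_or_eq_of_le (eps_lb ha hD j hjl) with h | h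
        · omega
        · exact absurd (this h.symm) hnd
      have hε'j : ε' j = x - (i : ℤ) - 1 := by
        rw [hε']
        simp only
        rw [if_pos ⟨i, hik, by omega, by omega⟩]
        omega
      have hβ'i : β' i = β i + 1 := by
        rw [hβ']
        simp only
        rw [if_pos ⟨j, hjl, by omega, by omega⟩]
      rw [hε'j, hβ'i, hyj, ← hxe]
      rw [truncate, btrunc, truncate, btrunc]
      simp only
      rw [if_pos (by omega : β i ≤ x - (i : ℤ) - 1)]
      rw [if_pos (by omega : β i + 1 ≤ x - (i : ℤ))]
      by_cases hfit : β i + 1 ≤ x - (i : ℤ) - 1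
      · rw [if_pos hfit]
        abel
      · rw [if_neg hfit]
        abel
    -- assemble
    rw [chainT, chainT, chainS, chainS, dchainS, dchainS, dchainT, dchainT]
    rw [hsplitk (fun i => truncate (β i, x - (i : ℤ))),
        hsplitk (fun i => ({(β i, x - (i : ℤ))} : Multiset (ℤ × ℤ))),
        hsplitk (fun i => truncate (β' i, x - (i : ℤ))),
        hsplitk (fun i => ({(β' i, x - (i : ℤ))} : Multiset (ℤ × ℤ))),
        hsplitl (fun j => btrunc (y + (j : ℤ), ε j)),
        hsplitl (fun j => ({(y + (j : ℤ), ε j)} : Multiset (ℤ × ℤ))),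
        hsplitl (fun j => btrunc (y + (j : ℤ), ε' j)),
        hsplitl (fun j => ({(y + (j : ℤ), ε' j)} : Multiset (ℤ × ℤ)))]
    rw [Finset.sum_congr rfl hA0eq1, Finset.sum_congr rfl hA0eq2,
        Finset.sum_congr rfl hB0eq1, Finset.sum_congr rfl hB0eq2]
    rw [hBsum (fun j => btrunc (y + (j : ℤ), ε' j)),
        hBsum (fun j => ({(y + (j : ℤ), ε j)} : Multiset (ℤ × ℤ))),
        hBsum (fun j => ({(y + (j : ℤ), ε' j)} : Multiset (ℤ × ℤ))),
        hBsum (fun j => btrunc (y + (j : ℤ), ε j))]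
    have hmerge : ∀ f1 f2 f3 f4 : ℕ → Multiset (ℤ × ℤ),
        (∑ i ∈ A1, f1 i) + (∑ i ∈ A1, f2 i) + (∑ i ∈ A1, f3 i) + (∑ i ∈ A1, f4 i)
          = ∑ i ∈ A1, (f1 i + f2 i + f3 i + f4 i) := by
      intro f1 f2 f3 f4
      rw [← Finset.sum_add_distrib, ← Finset.sum_add_distrib, ← Finset.sum_add_distrib]
    -- put everything in normal form and use pointwise identity
    have hkey : (∑ i ∈ A1, truncate (β i, x - (i : ℤ)))
        + (∑ i ∈ A1, btrunc (y + (((β i - y).toNat : ℕ) : ℤ), ε' ((β i - y).toNat)))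
        + (∑ i ∈ A1, ({(y + (((β i - y).toNat : ℕ) : ℤ), ε ((β i - y).toNat))} : Multiset (ℤ × ℤ)))
        + (∑ i ∈ A1, ({(β' i, x - (i : ℤ))} : Multiset (ℤ × ℤ)))
        = (∑ i ∈ A1, ({(β i, x - (i : ℤ))} : Multiset (ℤ × ℤ)))
        + (∑ i ∈ A1, ({(y + (((β i - y).toNat : ℕ) : ℤ), ε' ((β i - y).toNat))} : Multiset (ℤ × ℤ)))
        + (∑ i ∈ A1, btrunc (y + (((β i - y).toNat : ℕ) : ℤ), ε ((β i - y).toNat)))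
        + (∑ i ∈ A1, truncate (β' i, x - (i : ℤ))) := by
      rw [hmerge, hmerge]
      exact Finset.sum_congr rfl hpoint
    -- now pure AC rearrangement
    set a1 := ∑ i ∈ A1, truncate (β i, x - (i : ℤ)) with ha1
    set a2 := ∑ i ∈ A1, ({(β i, x - (i : ℤ))} : Multiset (ℤ × ℤ)) with ha2
    set a3 := ∑ i ∈ A1, truncate (β' i, x - (i : ℤ)) with ha3
    set a4 := ∑ i ∈ A1, ({(β' i, x - (i : ℤ))} : Multiset (ℤ × ℤ)) with ha4
    set b1 := ∑ i ∈ A1, btrunc (y + (((β i - y).toNat : ℕ) : ℤ), ε' ((β i - y).toNat)) with hb1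
    set b2 := ∑ i ∈ A1, ({(y + (((β i - y).toNat : ℕ) : ℤ), ε ((β i - y).toNat))} : Multiset (ℤ × ℤ)) with hb2
    set b3 := ∑ i ∈ A1, ({(y + (((β i - y).toNat : ℕ) : ℤ), ε' ((β i - y).toNat))} : Multiset (ℤ × ℤ)) with hb3
    set b4 := ∑ i ∈ A1, btrunc (y + (((β i - y).toNat : ℕ) : ℤ), ε ((β i - y).toNat)) with hb4
    set t1 := ∑ i ∈ A0, truncate (β i, x - (i : ℤ)) with ht1
    set t2 := ∑ i ∈ A0, ({(β i, x - (i : ℤ))} : Multiset (ℤ × ℤ)) with ht2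
    set t3 := ∑ j ∈ B0, btrunc (y + (j : ℤ), ε j) with ht3
    set t4 := ∑ j ∈ B0, ({(y + (j : ℤ), ε j)} : Multiset (ℤ × ℤ)) with ht4
    calc a1 + t1 + (b1 + t3) + (b2 + t4) + (a4 + t2)
        = (a1 + b1 + b2 + a4) + (t1 + t2 + t3 + t4) := by
          rw [← add_assoc, ← add_assoc, ← add_assoc, ← add_assoc]
          abel
      _ = (a2 + b3 + b4 + a3) + (t1 + t2 + t3 + t4) := by rw [hkey]
      _ = a2 + t2 + (b3 + t4) + (b4 + t3) + (a3 + t1) := by abel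
  -- from the identity, conclude by counting
  refine Multiset.ext.2 fun v => ?_
  have cS := Multiset.count_le_of_le v hS
  have cT := Multiset.count_le_of_le v hT
  have ch1 := Multiset.count_le_of_le v h1
  have ch2 := Multiset.count_le_of_le v h2
  have cid := congrArg (Multiset.count v) hIdent
  simp only [Multiset.count_add] at cid
  simp only [Multiset.count_add, Multiset.count_sub] at ch1 ch2 ⊢
  omega

end MWAProof

namespace MWAProof
open Multiset

theorem validMS_dstep {a : Multiset (ℤ × ℤ)} {y : ℤ} {l : ℕ} {ε : ℕ → ℤ}
    (ha : ValidMS a) : ValidMS (a - dchainS y l ε + dchainT y l ε) := by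
  have h := validMS_step (x := -y) (k := l) (β := fun j => -(ε j)) (validMS_reflMS ha)
  rw [← reflMS_dchainS, ← reflMS_dchainT, ← reflMS_sub, ← reflMS_add] at h
  have h2 := validMS_reflMS h
  rwa [reflMS_reflMS] at h2

theorem msSize_dstep {a : Multiset (ℤ × ℤ)} {y : ℤ} {l : ℕ} {ε : ℕ → ℤ}
    (ha : ValidMS a) (hD : DChainP a y l ε) :
    msSize (a - dchainS y l ε + dchainT y l ε) + l = msSize a := by
  have h := msSize_step (validMS_reflMS ha) (dchainP_iff.1 hD)
  rw [← reflMS_dchainS, ← reflMS_dchainT, ← reflMS_sub, ← reflMS_add, msSize_reflMS,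
    msSize_reflMS] at h
  exact h

theorem dchain_exists {a : Multiset (ℤ × ℤ)} (h0 : a ≠ 0) :
    ∃ y l ε, DChainP a y l ε := by
  have hrne : reflMS a ≠ 0 := fun h => h0 (reflMS_eq_zero.1 h)
  obtain ⟨l, ε0, hC⟩ := chain_exists hrne
  refine ⟨-(msMaxD ((reflMS a).map Prod.snd)), l, fun j => -(ε0 j), ?_⟩
  rw [dchainP_iff, neg_neg]
  have hfun : (fun j => -(-(ε0 j))) = ε0 := funext fun j => neg_neg _
  rw [hfun]
  exact hC

open Classical in
theorem mwa_refl_main : ∀ n (a : Multiset (ℤ × ℤ)), msSize a ≤ n → ValidMS a →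
    MWA (reflMS a) = reflMS (MWA a) := by
  intro n
  induction n with
  | zero =>
    intro a ha0 hav
    have h0 : a = 0 := eq_zero_of_msSize_eq_zero hav (Nat.le_zero.1 ha0)
    subst h0
    simp [MWA, reflMS, msSize, mwaAux]
  | succ n ih =>
    intro a hsz hav
    by_cases h0 : a = 0
    · subst h0
      simp [MWA, reflMS, msSize, mwaAux]
    · have hr0 : reflMS a ≠ 0 := fun h => h0 (reflMS_eq_zero.1 h)
      have hrv : ValidMS (reflMS a) := validMS_reflMS hav
      obtain ⟨k, β, hC⟩ := chain_exists h0
      obtain ⟨y, l, ε, hD⟩ := dchain_exists h0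
      set x := msMaxD (a.map Prod.snd) with hx
      clear_value x
      by_cases hdeg : ∃ i', i' < k ∧ β i' = y ∧ x - (i' : ℤ) = y
      · -- degenerate case: the chain is all points
        obtain ⟨hpts, hxy⟩ := degen_points hav hC hD hdeg
        have hTS0 : chainT x k β = 0 := by
          rw [chainT]
          apply Finset.sum_eq_zero
          intro i hi
          rw [truncate]
          simp only
          rw [if_neg (by have := hpts i (Finset.mem_range.1 hi); omega)]
        have hd2 : DChainP a y k (fun j => y + (j : ℤ)) := by
          refine ⟨hC.1, hD.2.1, ?_, ?_, ?_, ?_, ?_⟩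
          · intro j hj
            dsimp only
            have hik : k - 1 - j < k := by omega
            have := hC.2.2.1 (k - 1 - j) hik
            have hb := hpts (k - 1 - j) hik
            have hco : x - ((k - 1 - j : ℕ) : ℤ) = y + (j : ℤ) := by omega
            rw [hb, hco] at this
            exact this
          · intro j _
            dsimp only
            push_cast
            omega
          · intro e he
            dsimp only
            have := hav _ he
            simpa using this
          · intro j hj e hlt he
            dsimp only at hlt ⊢
            have := hav _ he
            simp only at this
            push_cast
            omega
          · intro e hlt he
            dsimp only at hlt
            have := hC.2.1 _ he
            simp only at this
            omega
        have hBT0 : dchainT y k (fun j => y + (j : ℤ)) = 0 := by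
          rw [dchainT]
          apply Finset.sum_eq_zero
          intro j _
          rw [btrunc]
          dsimp only
          rw [if_neg (by omega)]
        have hSeq : dchainS y k (fun j => y + (j : ℤ)) = chainS x k β := by
          rw [dchainS, chainS]
          refine Finset.sum_nbij' (fun j => k - 1 - j) (fun i => k - 1 - i) ?_ ?_ ?_ ?_ ?_
          · intro j hj
            simp only [Finset.mem_range] at *
            omega
          · intro i hi
            simp only [Finset.mem_range] at *
            have := hC.1
            omega
          · intro j hj
            simp only [Finset.mem_range] at hj
            omega
          · intro i hi
            simp only [Finset.mem_range] at hi
            omega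
          · intro j hj
            simp only [Finset.mem_range] at hj
            have hik : k - 1 - j < k := by omega
            rw [hpts (k - 1 - j) hik]
            have hco : x - ((k - 1 - j : ℕ) : ℤ) = y + (j : ℤ) := by omega
            rw [hco]
        have hstep1 : mwaStep a = ((x - ((k - 1 : ℕ) : ℤ), x), a - chainS x k β) := by
          rw [mwaStep_eq hC, hTS0, add_zero]
        have hstep2 : mwaStep (reflMS a) =
            ((-y - ((k - 1 : ℕ) : ℤ), -y), reflMS (a - chainS x k β)) := by
          rw [mwaStep_refl_eq hd2, hBT0, add_zero, hSeq]
        have hsz' : msSize (a - chainS x k β) < msSize a ∧ ValidMS (a - chainS x k β) := by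
          have h := mwaStep_valid_size hav h0
          rw [hstep1] at h
          exact ⟨h.2, h.1⟩
        have hih := ih (a - chainS x k β) (by omega) hsz'.2
        rw [MWA_unfold hrv hr0, hstep2]
        rw [MWA_unfold hav h0, hstep1]
        simp only
        rw [hih, reflMS_cons]
        congr 2 <;> omega
      · -- non-degenerate case: the diamond
        have hnd2 : ¬ ∃ j', j' < l ∧ (fun j => -(ε j)) j' = -x ∧
            -y - (j' : ℤ) = -x := by
          rintro ⟨j, hj, h1, h2⟩
          dsimp only at h1
          have hyx : y + (j : ℤ) = x := by omega
          have hex : ε j = x := by omega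
          exact hdeg (dual_top_degen hav hC hD hj hyx hex)
        have hC2' := claim1 (validMS_reflMS hav) (dchainP_iff.1 hD) (chainP_iff.1 hC) hnd2
        have h1' := claim1 hav hC hD hdeg
        set ε' : ℕ → ℤ := fun j => ε j -
            (if ∃ i, i < k ∧ β i = y + (j : ℤ) ∧ x - (i : ℤ) = ε j then 1 else 0) with hε'
        set β' : ℕ → ℤ := fun i => β i +
            (if ∃ j, j < l ∧ β i = y + (j : ℤ) ∧ x - (i : ℤ) = ε j then 1 else 0) with hβ'
        set b := a - dchainS y l ε + dchainT y l ε with hbdef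
        set a' := a - chainS x k β + chainT x k β with ha'def
        -- massage hC2' into a chain spec for b
        have hmult : reflMS a - chainS (-y) l (fun j => -(ε j))
            + chainT (-y) l (fun j => -(ε j)) = reflMS b := by
          rw [hbdef, reflMS_add, reflMS_sub, reflMS_dchainS, reflMS_dchainT]
        have hfun : (fun i => (fun i => -(β i)) i -
            (if ∃ i', i' < l ∧ (fun j => -(ε j)) i' = -x + (i : ℤ) ∧
              -y - (i' : ℤ) = (fun i => -(β i)) i then 1 else 0)) = fun i => -(β' i) := by
          funext i
          simp only [hβ']
          by_cases h : ∃ j, j < l ∧ β i = y + (j : ℤ) ∧ x - (i : ℤ) = ε j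
          · rw [if_pos, if_pos h]
            · ring
            · obtain ⟨j, hj, hb, he⟩ := h
              exact ⟨j, hj, by omega, by omega⟩
          · rw [if_neg, if_neg h]
            · ring
            · rintro ⟨j, hj, hb, he⟩
              exact h ⟨j, hj, by omega, by omega⟩
        rw [hmult] at hC2'
        have hC2'' : DChainP (reflMS b) (-x) k (fun i => -(β' i)) := by
          rw [← hfun]
          exact hC2'
        have hC2 : ChainP b x k β' := by
          have h := dchainP_iff.1 hC2''
          rw [reflMS_reflMS, neg_neg] at h
          have hfun2 : (fun i => -(-(β' i))) = β' := funext fun i => neg_neg _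
          rwa [hfun2] at h
        -- validity and sizes
        have hva' : ValidMS a' := validMS_step hav
        have hvb : ValidMS b := validMS_dstep hav
        have hsza' : msSize a' + k = msSize a := msSize_step hav hC
        have hszb : msSize b + l = msSize a := msSize_dstep hav hD
        have hk1 : 0 < k := hC.1
        have hl1 : 0 < l := hD.1
        have ha'0 : a' ≠ 0 := by
          intro h
          have := h1'.2.2.1 0 hl1
          rw [h] at this
          simp at this
        have hb0 : b ≠ 0 := by
          intro h
          have := hC2.2.2.1 0 hk1
          rw [h] at this
          simp at this
        set c1 := a' - dchainS y l ε' + dchainT y l ε' with hc1def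
        set c2 := b - chainS x k β' + chainT x k β' with hc2def
        have hszc1 : msSize c1 + l = msSize a' := msSize_dstep hva' h1'
        -- bookkeeping
        have hle1 : dchainS y l ε' ≤ a' := dchainS_le h1'.2.2.1
        have hle2 : chainS x k β' ≤ b := chainS_le hC2.2.2.1
        have hc12 : c1 = c2 := by
          rw [hc1def, hc2def, ha'def, hbdef]
          exact bookkeeping hav hC hD hdeg (by rwa [← ha'def]) (by rwa [← hbdef])
        -- unfoldings
        have hstepa : mwaStep a = ((x - ((k - 1 : ℕ) : ℤ), x), a') := mwaStep_eq hC
        have hstepra : mwaStep (reflMS a) = ((-y - ((l - 1 : ℕ) : ℤ), -y), reflMS b) :=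
          mwaStep_refl_eq hD
        have hstepb : mwaStep b = ((x - ((k - 1 : ℕ) : ℤ), x), c2) := mwaStep_eq hC2
        have hstepra' : mwaStep (reflMS a') = ((-y - ((l - 1 : ℕ) : ℤ), -y), reflMS c1) :=
          mwaStep_refl_eq h1'
        have hrb0 : reflMS b ≠ 0 := fun h => hb0 (reflMS_eq_zero.1 h)
        have hra'0 : reflMS a' ≠ 0 := fun h => ha'0 (reflMS_eq_zero.1 h)
        calc MWA (reflMS a)
            = (-y - ((l - 1 : ℕ) : ℤ), -y) ::ₘ MWA (reflMS b) := by
              rw [MWA_unfold hrv hr0, hstepra]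
          _ = (-y - ((l - 1 : ℕ) : ℤ), -y) ::ₘ reflMS (MWA b) := by
              rw [ih b (by omega) hvb]
          _ = (-y - ((l - 1 : ℕ) : ℤ), -y) ::ₘ reflMS ((x - ((k - 1 : ℕ) : ℤ), x) ::ₘ MWA c2) := by
              rw [MWA_unfold hvb hb0, hstepb]
          _ = (-y - ((l - 1 : ℕ) : ℤ), -y) ::ₘ (-x, -(x - ((k - 1 : ℕ) : ℤ))) ::ₘ
                reflMS (MWA c1) := by
              rw [reflMS_cons, hc12]
          _ = (-x, -(x - ((k - 1 : ℕ) : ℤ))) ::ₘ (-y - ((l - 1 : ℕ) : ℤ), -y) ::ₘ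
                reflMS (MWA c1) := Multiset.cons_swap _ _ _
          _ = (-x, -(x - ((k - 1 : ℕ) : ℤ))) ::ₘ (-y - ((l - 1 : ℕ) : ℤ), -y) ::ₘ
                MWA (reflMS c1) := by
              have hvc1 : ValidMS c1 := by
                rw [hc1def]
                exact validMS_dstep hva'
              rw [ih c1 (by omega) hvc1]
          _ = (-x, -(x - ((k - 1 : ℕ) : ℤ))) ::ₘ MWA (reflMS a') := by
              rw [MWA_unfold (validMS_reflMS hva') hra'0, hstepra']
          _ = (-x, -(x - ((k - 1 : ℕ) : ℤ))) ::ₘ reflMS (MWA a') := by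
              rw [ih a' (by omega) hva']
          _ = reflMS (MWA a) := by
              rw [MWA_unfold hav h0, hstepa, reflMS_cons]

end MWAProof


theorem mwa_commutes_with_reflection
    (a : Multiset (ℤ × ℤ)) (ha : ValidMS a) :
    MWA (reflMS a) = reflMS (MWA a) := by
  exact MWAProof.mwa_refl_main (msSize a) a le_rfl ha
end

section
/- Let a be a multisegment and suppose there are integers x and m ≥ 1 such that the end (maximum) of every segment of a lies in Finset.Icc x (x+m−1). Then every segment of MWA(a) has cardinality at most m. -/
namespace MWAProof

abbrev Seg := ℤ × ℤ

/-- The relation: `t` is strictly below-left of `s`. -/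
def rel (s t : Seg) : Prop := t.1 < s.1 ∧ t.2 < s.2

instance : IsTrans Seg rel := ⟨fun _ _ _ h1 h2 => ⟨h2.1.trans h1.1, h2.2.trans h1.2⟩⟩

/-- The bound invariant: every strictly decreasing (in both coordinates) list
of segments from `a` has length at most `m`. -/
def Bnd (m : ℤ) (a : Multiset Seg) : Prop :=
  ∀ L : List Seg, (↑L : Multiset Seg) ≤ a → L.Pairwise rel → (L.length : ℤ) ≤ m

lemma msMaxD_mem {M : Multiset ℤ} (h : M ≠ 0) : msMaxD M ∈ M := by
  have h1 : M.toFinset.Nonempty := by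
    rw [Multiset.toFinset_nonempty]; exact h
  obtain ⟨b, hb⟩ := Finset.max_of_nonempty h1
  have : msMaxD M = b := by unfold msMaxD; rw [hb]; rfl
  rw [this]
  exact Multiset.mem_toFinset.1 (Finset.mem_of_max hb)

lemma le_msMaxD {M : Multiset ℤ} {z : ℤ} (h : z ∈ M) : z ≤ msMaxD M := by
  have h1 : M.toFinset.Nonempty := ⟨z, Multiset.mem_toFinset.2 h⟩
  obtain ⟨b, hb⟩ := Finset.max_of_nonempty h1
  have h2 : msMaxD M = b := by unfold msMaxD; rw [hb]; rfl
  rw [h2]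
  have := Finset.le_max (Multiset.mem_toFinset.2 h)
  rw [hb] at this
  exact_mod_cast this

lemma le_of_notmem {u v w : Multiset Seg} (h : u ≤ v + w) (h2 : ∀ s ∈ u, s ∉ v) :
    u ≤ w := by
  rw [Multiset.le_iff_count] at h ⊢
  intro s
  by_cases hs : s ∈ u
  · have h3 := h s
    rw [Multiset.count_add] at h3
    have h4 : Multiset.count s v = 0 := Multiset.count_eq_zero.2 (h2 s hs)
    omega
  · simp [Multiset.count_eq_zero_of_notMem hs]

lemma mem_trunc_sum {D : List Seg} {s : Seg} (h : s ∈ (D.map truncate).sum) :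
    ∃ t ∈ D, s = (t.1, t.2 - 1) := by
  induction D with
  | nil => simp at h
  | cons hd tl ih =>
    rw [List.map_cons, List.sum_cons, Multiset.mem_add] at h
    rcases h with h | h
    · unfold truncate at h
      split_ifs at h
      · rw [Multiset.mem_singleton] at h
        exact ⟨hd, List.mem_cons_self, h⟩
      · simp at h
    · obtain ⟨t, ht, hst⟩ := ih h
      exact ⟨t, List.mem_cons_of_mem hd ht, hst⟩

lemma ends_antitone {L : List Seg} (hP : L.Pairwise rel) :
    ∀ (i j : ℕ) (hi : i < L.length) (hj : j < L.length), i ≤ j →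
      (L.get ⟨j, hj⟩).2 + (j : ℤ) ≤ (L.get ⟨i, hi⟩).2 + (i : ℤ) := by
  intro i j
  induction j with
  | zero =>
    intro hi hj hij
    interval_cases i
    exact le_refl _
  | succ j ih =>
    intro hi hj hij
    rcases Nat.eq_or_lt_of_le hij with h | h
    · subst h; exact le_refl _
    · have hj' : j < L.length := Nat.lt_of_succ_lt hj
      have h1 := ih hi hj' (Nat.lt_succ_iff.1 h)
      have h2 : rel (L.get ⟨j, hj'⟩) (L.get ⟨j+1, hj⟩) :=
        List.pairwise_iff_get.1 hP ⟨j, hj'⟩ ⟨j+1, hj⟩ (by simp [Fin.lt_def])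
      have h3 := h2.2
      push_cast
      push_cast at h1
      linarith

end MWAProof
namespace MWAProof

/-- Full specification of `chainAux`. -/
lemma chainAux_spec (n : ℕ) : ∀ (rem : Multiset Seg) (b e : ℤ),
    ∃ (D : List Seg) (rem' : Multiset Seg),
      rem = ↑D + rem' ∧
      chainAux n rem b e = (D.length, (D.map truncate).sum + rem') ∧
      (∀ i (h : i < D.length), (D.get ⟨i, h⟩).2 = e - i) ∧
      (∀ i (h : i < D.length), (D.get ⟨i, h⟩).1 < b) ∧
      (∀ i j (hi : i < D.length) (hj : j < D.length), i < j →
        (D.get ⟨j, hj⟩).1 < (D.get ⟨i, hi⟩).1) ∧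
      (∀ s ∈ rem', s.2 = e → s.1 < b → ∀ h : 0 < D.length, s.1 ≤ (D.get ⟨0, h⟩).1) ∧
      (∀ i (h : i + 1 < D.length), ∀ s ∈ rem', s.2 = e - (i + 1) →
        s.1 < (D.get ⟨i, Nat.lt_of_succ_lt h⟩).1 → s.1 ≤ (D.get ⟨i + 1, h⟩).1) := by
  induction n with
  | zero =>
    intro rem b e
    refine ⟨[], rem, by simp, by simp [chainAux], ?_, ?_, ?_, ?_, ?_⟩ <;>
      simp
  | succ n ih =>
    intro rem b e
    by_cases hS : rem.filter (fun s => s.2 = e ∧ s.1 < b) = 0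
    · refine ⟨[], rem, by simp, ?_, ?_, ?_, ?_, ?_, ?_⟩
      · simp only [chainAux]
        rw [if_pos hS]
        simp
      all_goals simp
    · set S := rem.filter (fun s => s.2 = e ∧ s.1 < b) with hSdef
      set b' := msMaxD (S.map Prod.fst) with hb'def
      have hSm : b' ∈ S.map Prod.fst := by
        apply msMaxD_mem
        simp only [ne_eq, Multiset.map_eq_zero]
        exact hS
      obtain ⟨s0, hs0S, hs0⟩ := Multiset.mem_map.1 hSm
      have hs0' := Multiset.mem_filter.1 hs0S
      have hs0rem : s0 ∈ rem := hs0'.1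
      have hs0e : s0.2 = e := hs0'.2.1
      have hs0b : s0.1 < b := hs0'.2.2
      have hs0eq : s0 = (b', e) := by
        rw [Prod.ext_iff]; exact ⟨hs0, hs0e⟩
      have hmem : (b', e) ∈ rem := hs0eq ▸ hs0rem
      have hb'b : b' < b := by rw [hs0eq] at hs0b; exact hs0b
      have hmax' : ∀ s ∈ rem, s.2 = e → s.1 < b → s.1 ≤ b' := by
        intro s hs h1 h2
        apply le_msMaxD
        apply Multiset.mem_map.2
        exact ⟨s, Multiset.mem_filter.2 ⟨hs, h1, h2⟩, rfl⟩
      obtain ⟨D', rem', h1, h2, hend, hltb, hdec, hmax0, hmaxs⟩ :=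
        ih (rem.erase (b', e)) b' (e - 1)
      refine ⟨(b', e) :: D', rem', ?_, ?_, ?_, ?_, ?_, ?_, ?_⟩
      · rw [← Multiset.cons_erase hmem, h1]
        simp [← Multiset.cons_coe, Multiset.cons_add]
      · simp only [chainAux]
        rw [if_neg hS]
        simp only [← hSdef, ← hb'def, h2]
        rw [List.map_cons, List.sum_cons, List.length_cons]
        simp [add_assoc]
      · intro i h
        match i with
        | 0 => simp
        | (i+1) =>
          have hi : i < D'.length := by simpa using h
          have := hend i hi
          simp only [List.get_cons_succ]
          push_cast
          omega
      · intro i h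
        match i with
        | 0 => exact hb'b
        | (i+1) =>
          have hi : i < D'.length := by simpa using h
          exact lt_trans (hltb i hi) hb'b
      · intro i j hi hj hij
        match i, j with
        | 0, (j+1) =>
          have hj' : j < D'.length := by simpa using hj
          exact hltb j hj'
        | (i+1), (j+1) =>
          have hi' : i < D'.length := by simpa using hi
          have hj' : j < D'.length := by simpa using hj
          exact hdec i j hi' hj' (by omega)
      · intro s hs he1 he2 h
        have hsrem : s ∈ rem := by
          have : s ∈ (↑D' : Multiset Seg) + rem' := Multiset.mem_add.2 (Or.inr hs)
          rw [← h1] at this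
          exact Multiset.mem_of_le (Multiset.erase_le _ _) this
        exact hmax' s hsrem he1 he2
      · intro i h s hs h1 h2
        cases i with
        | zero =>
          have h0 : 0 < D'.length := by simpa using h
          have := hmax0 s hs (by push_cast at h1 ⊢; omega) (by simpa using h2) h0
          simpa using this
        | succ i =>
          have h' : i + 1 < D'.length := by simpa using h
          have := hmaxs i h' s hs (by push_cast at h1 ⊢; omega) (by simpa using h2)
          simpa using this

end MWAProof
namespace MWAProof

lemma pairwise_of_spec (x : ℤ) (D : List Seg)
    (hend : ∀ i (h : i < D.length), (D.get ⟨i, h⟩).2 = x - i)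
    (hdec : ∀ i j (hi : i < D.length) (hj : j < D.length), i < j →
      (D.get ⟨j, hj⟩).1 < (D.get ⟨i, hi⟩).1) :
    D.Pairwise rel := by
  rw [List.pairwise_iff_get]
  intro i j hij
  have hij' : (i : ℕ) < (j : ℕ) := hij
  constructor
  · exact hdec i j i.isLt j.isLt hij'
  · have h1 : (D.get ⟨(i : ℕ), i.isLt⟩).2 = x - i := hend i i.isLt
    have h2 : (D.get ⟨(j : ℕ), j.isLt⟩).2 = x - j := hend j j.isLt
    have e1 : (D.get i).2 = x - i := h1
    have e2 : (D.get j).2 = x - j := h2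
    rw [e1, e2]
    have : (i : ℤ) < (j : ℤ) := by exact_mod_cast hij'
    omega

lemma preserve (m x : ℤ) (D : List Seg) (rem' : Multiset Seg)
    (hend : ∀ i (h : i < D.length), (D.get ⟨i, h⟩).2 = x - i)
    (hdec : ∀ i j (hi : i < D.length) (hj : j < D.length), i < j →
      (D.get ⟨j, hj⟩).1 < (D.get ⟨i, hi⟩).1)
    (hrtop : ∀ s ∈ rem', s.2 ≤ x)
    (hG1 : ∀ s ∈ rem', s.2 = x → ∀ h : 0 < D.length, s.1 ≤ (D.get ⟨0, h⟩).1)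
    (hG2 : ∀ i (h : i + 1 < D.length), ∀ s ∈ rem', s.2 = x - (i + 1) →
      s.1 < (D.get ⟨i, Nat.lt_of_succ_lt h⟩).1 → s.1 ≤ (D.get ⟨i + 1, h⟩).1)
    (hB : Bnd m (↑D + rem')) :
    Bnd m ((D.map truncate).sum + rem') := by
  intro L hL hP
  set Tr := (D.map truncate).sum with hTrdef
  have hTr : ∀ s ∈ Tr, ∃ i, ∃ h : i < D.length, s = ((D.get ⟨i, h⟩).1, x - i - 1) := by
    intro s hs
    obtain ⟨t, htD, hst⟩ := mem_trunc_sum hs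
    obtain ⟨⟨i, hi⟩, hti⟩ := List.mem_iff_get.1 htD
    refine ⟨i, hi, ?_⟩
    rw [hst, ← hti]
    have h2 := hend i hi
    rw [h2]
  have hLmem : ∀ s ∈ L, s ∈ Tr + rem' := fun s hs =>
    Multiset.mem_of_le hL (Multiset.mem_coe.2 hs)
  by_cases hex : ∃ i : Fin L.length, L.get i ∈ Tr
  · -- the hard case: some truncated segment is used
    set F : Finset (Fin L.length) := Finset.univ.filter (fun i => L.get i ∈ Tr) with hF
    have hFne : F.Nonempty := by
      obtain ⟨i, hi⟩ := hex
      exact ⟨i, by simp only [hF, Finset.mem_filter, Finset.mem_univ, true_and]; exact hi⟩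
    set q : Fin L.length := F.max' hFne with hqdef
    have hqTr : L.get q ∈ Tr := by
      have := F.max'_mem hFne
      rw [← hqdef] at this
      simpa [hF] using this
    have hqmax : ∀ i : Fin L.length, L.get i ∈ Tr → i ≤ q := fun i hi =>
      F.le_max' i (by simp only [hF, Finset.mem_filter, Finset.mem_univ, true_and]; exact hi)
    obtain ⟨j, hjD, hqval⟩ := hTr _ hqTr
    have hEA := ends_antitone hP
    have h0len : 0 < L.length := lt_of_le_of_lt (Nat.zero_le _) q.isLt
    have hhead : (L.get ⟨0, h0len⟩).2 ≤ x := by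
      have hm := hLmem _ (List.get_mem L ⟨0, h0len⟩)
      rcases Multiset.mem_add.1 hm with h | h
      · obtain ⟨i, hi, hv⟩ := hTr _ h
        rw [hv]
        simp only []
        omega
      · exact hrtop _ h
    have hq2 : (L.get ⟨(q : ℕ), q.isLt⟩).2 = x - j - 1 := by
      have : L.get ⟨(q : ℕ), q.isLt⟩ = L.get q := rfl
      rw [this, hqval]
    have hqle : (q : ℕ) ≤ j + 1 := by
      have h1 := hEA 0 (q : ℕ) h0len q.isLt (Nat.zero_le _)
      rw [hq2] at h1
      omega
    by_cases hcase : (q : ℕ) ≤ j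
    · -- construction case : replace everything above the last trunc by D.take (j+1)
      set L' := D.take (j + 1) ++ L.drop ((q : ℕ) + 1) with hL'def
      have htlen : (D.take (j + 1)).length = j + 1 := by
        rw [List.length_take]; omega
      have h1 : (↑(D.take (j + 1)) : Multiset Seg) ≤ ↑D :=
        Multiset.coe_le.2 (List.take_sublist _ _).subperm
      have hdropsub : (L.drop ((q : ℕ) + 1)).Sublist L := List.drop_sublist _ _
      have hdroplen : (L.drop ((q : ℕ) + 1)).length = L.length - ((q : ℕ) + 1) :=
        List.length_drop
      have hdropidx : ∀ (i : ℕ) (hi : i < (L.drop ((q : ℕ) + 1)).length),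
          ∃ h : (q : ℕ) + 1 + i < L.length,
            (L.drop ((q : ℕ) + 1)).get ⟨i, hi⟩ = L.get ⟨(q : ℕ) + 1 + i, h⟩ := by
        intro i hi
        have h : (q : ℕ) + 1 + i < L.length := by omega
        exact ⟨h, by simp⟩
      have h2 : (↑(L.drop ((q : ℕ) + 1)) : Multiset Seg) ≤ rem' := by
        apply le_of_notmem (le_trans (Multiset.coe_le.2 hdropsub.subperm) hL)
        intro s hs hsTr
        obtain ⟨⟨i, hi⟩, hig⟩ := List.mem_iff_get.1 hs
        obtain ⟨h, hg⟩ := hdropidx i hi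
        have hsq : (⟨(q : ℕ) + 1 + i, h⟩ : Fin L.length) ≤ q := by
          apply hqmax
          rw [← hg, hig]; exact hsTr
        have : (q : ℕ) + 1 + i ≤ (q : ℕ) := hsq
        omega
      have hPD : D.Pairwise rel := pairwise_of_spec x D hend hdec
      have hPtake : (D.take (j + 1)).Pairwise rel :=
        List.Pairwise.sublist (List.take_sublist _ _) hPD
      have hPdrop : (L.drop ((q : ℕ) + 1)).Pairwise rel :=
        List.Pairwise.sublist hdropsub hP
      have htakeidx : ∀ s ∈ D.take (j + 1), ∃ i, ∃ h : i < D.length,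
          i ≤ j ∧ s = D.get ⟨i, h⟩ := by
        intro s hs
        obtain ⟨⟨i, hi⟩, hig⟩ := List.mem_iff_get.1 hs
        have hij : i < j + 1 := htlen ▸ hi
        have hiD : i < D.length := by omega
        refine ⟨i, hiD, by omega, ?_⟩
        rw [← hig]
        simp
      have hPL' : L'.Pairwise rel := by
        rw [hL'def, List.pairwise_append]
        refine ⟨hPtake, hPdrop, ?_⟩
        intro s hs t ht
        obtain ⟨i, hiD, hij, hsval⟩ := htakeidx s hs
        obtain ⟨⟨i', hi'⟩, hig⟩ := List.mem_iff_get.1 ht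
        obtain ⟨h, hg⟩ := hdropidx i' hi'
        have hrelq : rel (L.get ⟨(q : ℕ), q.isLt⟩) (L.get ⟨(q : ℕ) + 1 + i', h⟩) := by
          apply List.pairwise_iff_get.1 hP
          simp only [Fin.lt_def]
          omega
        have htval : t = L.get ⟨(q : ℕ) + 1 + i', h⟩ := by rw [← hig, hg]
        have hqv : L.get ⟨(q : ℕ), q.isLt⟩ = ((D.get ⟨j, hjD⟩).1, x - j - 1) := hqval
        have hjle : (D.get ⟨j, hjD⟩).1 ≤ (D.get ⟨i, hiD⟩).1 := by
          rcases Nat.eq_or_lt_of_le hij with h' | h'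
          · subst h'; exact le_refl _
          · exact le_of_lt (hdec i j hiD hjD h')
        have hends : (D.get ⟨i, hiD⟩).2 = x - i := hend i hiD
        constructor
        · rw [htval, hsval]
          have := hrelq.1
          rw [hqv] at this
          exact lt_of_lt_of_le this hjle
        · rw [htval, hsval, hends]
          have := hrelq.2
          rw [hqv] at this
          have hii : (i : ℤ) ≤ (j : ℤ) := by exact_mod_cast hij
          omega
      have hL'le : (↑L' : Multiset Seg) ≤ ↑D + rem' := by
        rw [hL'def]
        have : (↑(D.take (j + 1) ++ L.drop ((q : ℕ) + 1)) : Multiset Seg) =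
            ↑(D.take (j + 1)) + ↑(L.drop ((q : ℕ) + 1)) := by
          simp
        rw [this]
        exact add_le_add h1 h2
      have hres := hB L' hL'le hPL'
      have hlen : L.length ≤ L'.length := by
        rw [hL'def, List.length_append, htlen, hdroplen]
        have := q.isLt
        omega
      have : (L.length : ℤ) ≤ (L'.length : ℤ) := by exact_mod_cast hlen
      linarith
    · -- contradiction case : q = j + 1
      exfalso
      have hqj1 : (q : ℕ) = j + 1 := by omega
      have hpinch : ∀ p (hp : p ≤ (q : ℕ)),
          (L.get ⟨p, lt_of_le_of_lt hp q.isLt⟩).2 = x - p := by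
        intro p hp
        have hplt : p < L.length := lt_of_le_of_lt hp q.isLt
        have hup := hEA 0 p h0len hplt (Nat.zero_le _)
        have hlo := hEA p (q : ℕ) hplt q.isLt hp
        rw [hq2] at hlo
        have hbr : (L.get ⟨p, lt_of_le_of_lt hp q.isLt⟩).2 = (L.get ⟨p, hplt⟩).2 := rfl
        rw [hbr]
        omega
      set p1 : Fin L.length := F.min' hFne with hp1def
      have hp1Tr : L.get p1 ∈ Tr := by
        have := F.min'_mem hFne
        rw [← hp1def] at this
        simpa [hF] using this
      have hp1min : ∀ i : Fin L.length, L.get i ∈ Tr → p1 ≤ i := fun i hi =>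
        F.min'_le i (by simp only [hF, Finset.mem_filter, Finset.mem_univ, true_and]; exact hi)
      obtain ⟨i1, hi1D, hp1val⟩ := hTr _ hp1Tr
      have hp1q : (p1 : ℕ) ≤ (q : ℕ) := hp1min q hqTr
      have hp1eq : (p1 : ℕ) = i1 + 1 := by
        have hpi := hpinch (p1 : ℕ) hp1q
        have hbr : (L.get ⟨(p1 : ℕ), lt_of_le_of_lt hp1q q.isLt⟩) = L.get p1 := rfl
        rw [hbr, hp1val] at hpi
        simp only [] at hpi
        omega
      -- the monotone descent claim
      have hclaim : ∀ p, p < (p1 : ℕ) → ∀ (hplt : p < L.length) (hpD : p < D.length),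
          (L.get ⟨p, hplt⟩).1 ≤ (D.get ⟨p, hpD⟩).1 := by
        intro p
        induction p with
        | zero =>
          intro hp hplt hpD
          have hmem := hLmem _ (List.get_mem L ⟨0, hplt⟩)
          have hnT : L.get ⟨0, hplt⟩ ∉ Tr := by
            intro hT
            have := hp1min ⟨0, hplt⟩ hT
            have : (p1 : ℕ) ≤ 0 := this
            omega
          have hrem : L.get ⟨0, hplt⟩ ∈ rem' := by
            rcases Multiset.mem_add.1 hmem with h | h
            · exact absurd h hnT
            · exact h
          have hend0 : (L.get ⟨0, hplt⟩).2 = x := by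
            have := hpinch 0 (Nat.zero_le _)
            have hbr : (L.get ⟨0, lt_of_le_of_lt (Nat.zero_le _) q.isLt⟩) =
                L.get ⟨0, hplt⟩ := rfl
            rw [hbr] at this
            simpa using this
          exact hG1 _ hrem hend0 hpD
        | succ p ih =>
          intro hp hplt hpD
          have hp' : p < (p1 : ℕ) := by omega
          have hplt' : p < L.length := by omega
          have hpD' : p < D.length := by omega
          have ihp := ih hp' hplt' hpD'
          have hmem := hLmem _ (List.get_mem L ⟨p + 1, hplt⟩)
          have hnT : L.get ⟨p + 1, hplt⟩ ∉ Tr := by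
            intro hT
            have h2 := hp1min ⟨p + 1, hplt⟩ hT
            have : (p1 : ℕ) ≤ p + 1 := h2
            omega
          have hrem : L.get ⟨p + 1, hplt⟩ ∈ rem' := by
            rcases Multiset.mem_add.1 hmem with h | h
            · exact absurd h hnT
            · exact h
          have hendp : (L.get ⟨p + 1, hplt⟩).2 = x - (p + 1) := by
            have hple : p + 1 ≤ (q : ℕ) := by omega
            have := hpinch (p + 1) hple
            have hbr : (L.get ⟨p + 1, lt_of_le_of_lt hple q.isLt⟩) =
                L.get ⟨p + 1, hplt⟩ := rfl
            rw [hbr] at this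
            rw [this]
            push_cast
            ring
          have hcons : (L.get ⟨p + 1, hplt⟩).1 < (L.get ⟨p, hplt'⟩).1 := by
            have := List.pairwise_iff_get.1 hP ⟨p, hplt'⟩ ⟨p + 1, hplt⟩
              (by simp [Fin.lt_def])
            exact this.1
          have hlt : (L.get ⟨p + 1, hplt⟩).1 <
              (D.get ⟨p, Nat.lt_of_succ_lt hpD⟩).1 := by
            have hbr : (D.get ⟨p, Nat.lt_of_succ_lt hpD⟩).1 = (D.get ⟨p, hpD'⟩).1 := rfl
            rw [hbr]
            exact lt_of_lt_of_le hcons ihp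
          exact hG2 p hpD _ hrem hendp hlt
      -- conclude the contradiction
      have hi1p : i1 < (p1 : ℕ) := by omega
      have hi1L : i1 < L.length := lt_of_lt_of_le hi1p (le_of_lt p1.isLt)
      have hfinal := hclaim i1 hi1p hi1L hi1D
      have hconsf : (L.get p1).1 < (L.get ⟨i1, hi1L⟩).1 := by
        have := List.pairwise_iff_get.1 hP ⟨i1, hi1L⟩ p1 (by simp [Fin.lt_def]; omega)
        exact this.1
      have hval : (L.get p1).1 = (D.get ⟨i1, hi1D⟩).1 := by rw [hp1val]
      rw [hval] at hconsf
      linarith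
  · -- no truncated segment is used
    push_neg at hex
    have hnot : ∀ s ∈ L, s ∉ Tr := by
      intro s hs
      obtain ⟨i, hi⟩ := List.mem_iff_get.1 hs
      rw [← hi]
      exact hex i
    have hle : (↑L : Multiset Seg) ≤ rem' := le_of_notmem hL hnot
    exact hB L (le_trans hle (Multiset.le_add_left _ _)) hP

end MWAProof
namespace MWAProof

lemma step_main (m : ℤ) (a : Multiset Seg) (h0 : a ≠ 0) (hB : Bnd m a) :
    (mwaStep a).1.2 - (mwaStep a).1.1 + 1 ≤ m ∧ Bnd m (mwaStep a).2 := by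
  set x := msMaxD (a.map Prod.snd) with hxdef
  set b1 := msMaxD ((a.filter fun s => s.2 = x).map Prod.fst) with hb1def
  have hmapne : a.map Prod.snd ≠ 0 := by
    simp only [ne_eq, Multiset.map_eq_zero]; exact h0
  have hxmem : x ∈ a.map Prod.snd := msMaxD_mem hmapne
  obtain ⟨sx, hsx, hsx2⟩ := Multiset.mem_map.1 hxmem
  have htop : ∀ s ∈ a, s.2 ≤ x := fun s hs =>
    le_msMaxD (Multiset.mem_map.2 ⟨s, hs, rfl⟩)
  have hFne : (a.filter fun s => s.2 = x) ≠ 0 := by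
    intro hc
    have : sx ∈ a.filter fun s => s.2 = x := Multiset.mem_filter.2 ⟨hsx, hsx2⟩
    rw [hc] at this
    simp at this
  have hb1mem : b1 ∈ (a.filter fun s => s.2 = x).map Prod.fst :=
    msMaxD_mem (by simp only [ne_eq, Multiset.map_eq_zero]; exact hFne)
  obtain ⟨s1, hs1, hs11⟩ := Multiset.mem_map.1 hb1mem
  have hs1' := Multiset.mem_filter.1 hs1
  have hmem1 : (b1, x) ∈ a := by
    have heq : s1 = (b1, x) := by
      rw [Prod.ext_iff]; exact ⟨hs11, hs1'.2⟩
    rw [← heq]; exact hs1'.1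
  have hmax1 : ∀ s ∈ a, s.2 = x → s.1 ≤ b1 := fun s hs h2 =>
    le_msMaxD (Multiset.mem_map.2 ⟨s, Multiset.mem_filter.2 ⟨hs, h2⟩, rfl⟩)
  obtain ⟨D', rem', h1, h2, hend', hltb', hdec', hmax0', hmaxs'⟩ :=
    chainAux_spec a.card (a.erase (b1, x)) b1 (x - 1)
  have ha : a = ↑(((b1, x) :: D' : List Seg)) + rem' := by
    rw [← Multiset.cons_erase hmem1, h1]
    simp [← Multiset.cons_coe, Multiset.cons_add]
  have hstep : mwaStep a = ((x - D'.length, x), ((((b1, x) :: D' : List Seg)).map truncate).sum + rem') := by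
    have hr : mwaStep a = ((x - (chainAux a.card (a.erase (b1, x)) b1 (x - 1)).1, x),
        truncate (b1, x) + (chainAux a.card (a.erase (b1, x)) b1 (x - 1)).2) := rfl
    rw [hr, h2]
    simp only [List.map_cons, List.sum_cons]
    rw [add_assoc]
  have hend : ∀ i (h : i <(((b1, x) :: D' : List Seg)).length), ((((b1, x) :: D' : List Seg)).get ⟨i, h⟩).2 = x - i := by
    intro i h
    match i with
    | 0 => simp
    | (i+1) =>
      have hi : i < D'.length := by simpa using h
      have := hend' i hi
      simp only [List.get_cons_succ]
      push_cast
      omega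
  have hdec : ∀ i j (hi : i <(((b1, x) :: D' : List Seg)).length) (hj : j <(((b1, x) :: D' : List Seg)).length), i < j →
      ((((b1, x) :: D' : List Seg)).get ⟨j, hj⟩).1 < ((((b1, x) :: D' : List Seg)).get ⟨i, hi⟩).1 := by
    intro i j hi hj hij
    match i, j with
    | 0, (j+1) =>
      have hj' : j < D'.length := by simpa using hj
      exact hltb' j hj'
    | (i+1), (j+1) =>
      have hi' : i < D'.length := by simpa using hi
      have hj' : j < D'.length := by simpa using hj
      exact hdec' i j hi' hj' (by omega)
  have hrtop : ∀ s ∈ rem', s.2 ≤ x := by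
    intro s hs
    exact htop s (by rw [ha]; exact Multiset.mem_add.2 (Or.inr hs))
  have hG1 : ∀ s ∈ rem', s.2 = x → ∀ h : 0 <(((b1, x) :: D' : List Seg)).length, s.1 ≤ ((((b1, x) :: D' : List Seg)).get ⟨0, h⟩).1 := by
    intro s hs h2' _
    exact hmax1 s (by rw [ha]; exact Multiset.mem_add.2 (Or.inr hs)) h2'
  have hG2 : ∀ i (h : i + 1 <(((b1, x) :: D' : List Seg)).length), ∀ s ∈ rem', s.2 = x - (i + 1) →
      s.1 < ((((b1, x) :: D' : List Seg)).get ⟨i, Nat.lt_of_succ_lt h⟩).1 → s.1 ≤ ((((b1, x) :: D' : List Seg)).get ⟨i + 1, h⟩).1 := by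
    intro i h s hs h1' h2'
    match i with
    | 0 =>
      have h0' : 0 < D'.length := by simpa using h
      have := hmax0' s hs (by push_cast at h1' ⊢; omega) (by simpa using h2') h0'
      simpa using this
    | (i+1) =>
      have h' : i + 1 < D'.length := by simpa using h
      have := hmaxs' i h' s hs (by push_cast at h1' ⊢; omega)
        (by simpa using h2')
      simpa using this
  have hPD : (((b1, x) :: D' : List Seg)).Pairwise rel := pairwise_of_spec x (((b1, x) :: D' : List Seg)) hend hdec
  have hDle : (↑(((b1, x) :: D' : List Seg)) : Multiset Seg) ≤ a := by
    rw [ha]; exact Multiset.le_add_right _ _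
  have hDm : (((((b1, x) :: D' : List Seg)).length : ℤ)) ≤ m := hB (((b1, x) :: D' : List Seg)) hDle hPD
  have hDlen : ((((b1, x) :: D' : List Seg)).length : ℤ) = (D'.length : ℤ) + 1 := by
    simp
  constructor
  · rw [hstep]
    simp only []
    omega
  · rw [hstep]
    exact preserve m x (((b1, x) :: D' : List Seg)) rem' hend hdec hrtop hG1 hG2 (ha ▸ hB)

lemma mwaAux_bound (m : ℤ) : ∀ (n : ℕ) (a : Multiset Seg), Bnd m a →
    ∀ s ∈ mwaAux n a, s.2 - s.1 + 1 ≤ m := by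
  intro n
  induction n with
  | zero => intro a _ s hs; simp [mwaAux] at hs
  | succ n ih =>
    intro a hB s hs
    by_cases h0 : a = 0
    · rw [mwaAux, if_pos h0] at hs
      simp at hs
    · rw [mwaAux, if_neg h0] at hs
      rcases Multiset.mem_cons.1 hs with h | h
      · rw [h]
        exact (step_main m a h0 hB).1
      · exact ih (mwaStep a).2 (step_main m a h0 hB).2 s h

end MWAProof
theorem mwa_segment_length_bound
    (a : Multiset (ℤ × ℤ)) (ha : ValidMS a) (x m : ℤ) (hm : 1 ≤ m)
    (hends : ∀ s ∈ a, s.2 ∈ Finset.Icc x (x + m - 1)) :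
    ∀ s ∈ MWA a, s.2 - s.1 + 1 ≤ m := by
  have hBnd : MWAProof.Bnd m a := by
    intro L hLle hLpw
    by_cases hL0 : L = []
    · subst hL0
      simp only [List.length_nil, Nat.cast_zero]
      linarith
    · have hlen : 0 < L.length := List.length_pos_iff.2 hL0
      have hlast : L.length - 1 < L.length := by omega
      have h1 := MWAProof.ends_antitone hLpw 0 (L.length - 1) hlen hlast (by omega)
      have hm0 : L.get ⟨0, hlen⟩ ∈ a :=
        Multiset.mem_of_le hLle (Multiset.mem_coe.2 (List.get_mem L ⟨0, hlen⟩))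
      have hm1 : L.get ⟨L.length - 1, hlast⟩ ∈ a :=
        Multiset.mem_of_le hLle (Multiset.mem_coe.2 (List.get_mem L ⟨_, hlast⟩))
      have hb0 := Finset.mem_Icc.1 (hends _ hm0)
      have hb1 := Finset.mem_Icc.1 (hends _ hm1)
      omega
  exact MWAProof.mwaAux_bound m (msSize a) a hBnd
end

section
/- Let (A1,B1,C1,D1) and (A2,B2,C2,D2) be Speh quadruples with C1 = C2 and A1 ≤ A2, and set I_i = I(A_i,B_i,C_i,D_i) for i = 1, 2. Then there do not exist integers i < j < k with i, k ∈ I1 \ I2 and j ∈ I2 \ I1. -/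
theorem no_pattern_of_eq_C
    (A1 B1 C1 D1 A2 B2 C2 D2 : ℤ)
    (h1 : SpehQuad A1 B1 C1 D1) (h2 : SpehQuad A2 B2 C2 D2)
    (hC : C1 = C2) (hA : A1 ≤ A2) :
    ¬ PPat (ISet A1 B1 C1 D1) (ISet A2 B2 C2 D2) := by
  rintro ⟨i, j, k, hij, hjk, hi, hj, hk⟩
  obtain ⟨_, _, e1⟩ := h1
  obtain ⟨_, _, e2⟩ := h2
  simp only [ISet, Set.mem_diff, Set.mem_union, Set.mem_setOf_eq, Finset.coe_Icc,
    Set.mem_Icc, not_or, not_and, not_le] at hi hj hk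
  omega
end

section
/- Let M1 = (A1,B1,C1,D1) and M2 = (A2,B2,C2,D2) be Speh quadruples, and set I_i = I(A_i,B_i,C_i,D_i) for i = 1, 2. Say that pattern P12 holds if there exist integers i < j < k with i, k ∈ I1 \ I2 and j ∈ I2 \ I1, and pattern P21 holds if there exist integers i < j < k with i, k ∈ I2 \ I1 and j ∈ I1 \ I2. Define R(M1,M2) as follows: if C2 < C1, R(M1,M2) means P12; if C1 < C2, R(M1,M2) means P21; if C1 = C2, R(M1,M2) means P12 and P21. Then R(M1,M2) holds if and only if [Finset.Icc A1 D1 ∪ Finset.Icc A2 D2 is a ℤ-segment and (M1 <strong M2 or M2 <strong M1)]. -/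
theorem LNT_pattern_iff_linked_and_crossed
    (A1 B1 C1 D1 A2 B2 C2 D2 : ℤ)
    (h1 : SpehQuad A1 B1 C1 D1) (h2 : SpehQuad A2 B2 C2 D2) :
    (if C2 < C1 then PPat (ISet A1 B1 C1 D1) (ISet A2 B2 C2 D2)
      else if C1 < C2 then PPat (ISet A2 B2 C2 D2) (ISet A1 B1 C1 D1)
      else PPat (ISet A1 B1 C1 D1) (ISet A2 B2 C2 D2) ∧
        PPat (ISet A2 B2 C2 D2) (ISet A1 B1 C1 D1)) ↔
    (IsZSegment (Finset.Icc A1 D1 ∪ Finset.Icc A2 D2) ∧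
      (StrongLt A1 B1 C1 D1 A2 B2 C2 D2 ∨ StrongLt A2 B2 C2 D2 A1 B1 C1 D1)) := by
  obtain ⟨hab1, hac1, had1⟩ := h1
  obtain ⟨hab2, hac2, had2⟩ := h2
  have hmem : ∀ A B C D z : ℤ, z ∈ ISet A B C D ↔ (z ≤ A - 1 ∨ (B + 1 ≤ z ∧ z ≤ D + 1)) := by
    intro A B C D z
    simp [ISet, Set.mem_union, Set.mem_setOf_eq, Finset.coe_Icc, Set.mem_Icc]
  have hpp : ∀ A B C D A' B' C' D' : ℤ,
      PPat (ISet A B C D) (ISet A' B' C' D') ↔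
      ∃ i j k : ℤ, i < j ∧ j < k ∧
        ((i ≤ A - 1 ∨ (B + 1 ≤ i ∧ i ≤ D + 1)) ∧ ¬(i ≤ A' - 1 ∨ (B' + 1 ≤ i ∧ i ≤ D' + 1))) ∧
        ((j ≤ A' - 1 ∨ (B' + 1 ≤ j ∧ j ≤ D' + 1)) ∧ ¬(j ≤ A - 1 ∨ (B + 1 ≤ j ∧ j ≤ D + 1))) ∧
        ((k ≤ A - 1 ∨ (B + 1 ≤ k ∧ k ≤ D + 1)) ∧ ¬(k ≤ A' - 1 ∨ (B' + 1 ≤ k ∧ k ≤ D' + 1))) := by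
    intro A B C D A' B' C' D'
    unfold PPat
    constructor
    · rintro ⟨i, j, k, hij, hjk, hi, hj, hk⟩
      exact ⟨i, j, k, hij, hjk,
        ⟨(hmem _ _ _ _ _).1 hi.1, fun h => hi.2 ((hmem _ _ _ _ _).2 h)⟩,
        ⟨(hmem _ _ _ _ _).1 hj.1, fun h => hj.2 ((hmem _ _ _ _ _).2 h)⟩,
        ⟨(hmem _ _ _ _ _).1 hk.1, fun h => hk.2 ((hmem _ _ _ _ _).2 h)⟩⟩
    · rintro ⟨i, j, k, hij, hjk, hi, hj, hk⟩
      exact ⟨i, j, k, hij, hjk,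
        ⟨(hmem _ _ _ _ _).2 hi.1, fun h => hi.2 ((hmem _ _ _ _ _).1 h)⟩,
        ⟨(hmem _ _ _ _ _).2 hj.1, fun h => hj.2 ((hmem _ _ _ _ _).1 h)⟩,
        ⟨(hmem _ _ _ _ _).2 hk.1, fun h => hk.2 ((hmem _ _ _ _ _).1 h)⟩⟩
  have hseg : IsZSegment (Finset.Icc A1 D1 ∪ Finset.Icc A2 D2) ↔
      (A2 ≤ D1 + 1 ∧ A1 ≤ D2 + 1) := by
    constructor
    · rintro ⟨x, y, hxy, hE⟩
      have hm : ∀ z : ℤ, ((A1 ≤ z ∧ z ≤ D1) ∨ (A2 ≤ z ∧ z ≤ D2)) ↔ (x ≤ z ∧ z ≤ y) := by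
        intro z
        have := Finset.ext_iff.mp hE z
        simpa [Finset.mem_union, Finset.mem_Icc] using this
      have e1 := hm A1
      have e2 := hm A2
      have e3 := hm D1
      have e4 := hm D2
      have e5 := hm (D1 + 1)
      have e6 := hm (D2 + 1)
      omega
    · rintro ⟨ha, hb⟩
      refine ⟨min A1 A2, max D1 D2, by omega, ?_⟩
      ext z
      simp only [Finset.mem_union, Finset.mem_Icc]
      omega
  rw [hseg]
  unfold StrongLt
  split_ifs with hc1 hc2
  · rw [hpp]
    constructor
    · rintro ⟨i, j, k, hij, hjk, hi, hj, hk⟩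
      omega
    · rintro ⟨hs, h | h⟩
      · omega
      · refine ⟨A2, max (B2 + 1) A1, D1 + 1, ?_, ?_, ?_, ?_, ?_⟩ <;> omega
  · rw [hpp]
    constructor
    · rintro ⟨i, j, k, hij, hjk, hi, hj, hk⟩
      omega
    · rintro ⟨hs, h | h⟩
      · refine ⟨A1, max (B1 + 1) A2, D2 + 1, ?_, ?_, ?_, ?_, ?_⟩ <;> omega
      · omega
  · rw [hpp, hpp]
    constructor
    · rintro ⟨⟨i, j, k, hij, hjk, hi, hj, hk⟩, ⟨i', j', k', hij', hjk', hi', hj', hk'⟩⟩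
      omega
    · rintro ⟨hs, h | h⟩ <;> omega
end
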